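/- arXiv:2404.10424 — 7 statements merged into one kernel-verified Lean document; each statement's English description precedes it below -/
import Mathlib

section
/- For positive integers c dividing d and a finitely generated free R_d-module V, the map pr_{c,d}(Z) = Σ_{k=0}^{d/c-1} N^k Z N^{d/c-1-k} satisfies ⟨pr_{c,d}(Z), Z'⟩_d = ⟨Z, Z'⟩_c for all Z ∈ End_{R_c}(V) and Z' ∈ End_{R_d}(V), i.e. pr_{c,d} is the transpose of the inclusion End_{R_d}(V) ↪ End_{R_c}(V) with respect to the residue-trace pairings. -/
open Polynomial Finset

/-- The truncated polynomial ring `R_d = ℂ[ε]/(ε^d)`. -/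
abbrev Rmod (d : ℕ) : Type := AdjoinRoot (X ^ d : ℂ[X])

/-- The class of the variable `ε` in `R_d`. -/
noncomputable def eps (d : ℕ) : Rmod d := AdjoinRoot.root _

/-- The coefficient of `ε^k` of (the canonical representative of) an element of `R_d`. -/
noncomputable def coeffD (d : ℕ) (k : ℕ) (f : Rmod d) : ℂ :=
  (AdjoinRoot.modByMonicHom (monic_X_pow d) f).coeff k

/-- The residue `res_{ε=0}(f dε/ε^d)`, i.e. the coefficient of `ε^{d-1}`. -/
noncomputable def res (d : ℕ) (f : Rmod d) : ℂ := coeffD d (d - 1) f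

lemma coeffD_mk (d j : ℕ) (hj : j < d) (p : ℂ[X]) :
    coeffD d j (AdjoinRoot.mk _ p) = p.coeff j := by
  rw [coeffD, AdjoinRoot.modByMonicHom_mk, modByMonic_eq_sub_mul_div _ (X ^ d),
    coeff_sub, mul_comm, coeff_mul_X_pow', if_neg (by omega), sub_zero]

lemma coeffD_pow_mul (d j k : ℕ) (hk : k ≤ j) (hj : j < d) (x : Rmod d) :
    coeffD d j (eps d ^ k * x) = coeffD d (j - k) x := by
  obtain ⟨p, rfl⟩ := AdjoinRoot.mk_surjective x
  have : eps d ^ k * AdjoinRoot.mk _ p = AdjoinRoot.mk _ (X ^ k * p) := by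
    rw [map_mul, map_pow]; rfl
  rw [this, coeffD_mk d j hj, coeffD_mk d (j - k) (by omega), mul_comm,
    coeff_mul_X_pow', if_pos hk]

lemma coeffD_sum {ι : Type*} (s : Finset ι) (d j : ℕ) (f : ι → Rmod d) :
    coeffD d j (∑ k ∈ s, f k) = ∑ k ∈ s, coeffD d j (f k) := by
  simp [coeffD, map_sum, finset_sum_coeff]

/-- for `c ∣ d` and the free `R_d`-module `V = R_d^n`,
`⟨pr_{c,d}(Z), Z'⟩_d = ⟨Z, Z'⟩_c` for every `R_c`-linear endomorphism `Z` of `V`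
and every `R_d`-linear endomorphism `Z'` of `V`.  Here `Z` being `R_c`-linear is
expressed as: `Z` is `ℂ`-linear and commutes with multiplication by
`ε_c = ε_d^{d/c}`; similarly for `Z'`.  The pairing `⟨X,Y⟩_e` is the residue of
the `R_e`-trace of `XY`, computed with respect to the standard bases:
`tr_{R_d}` has diagonal entries `(f (e_i)) i` and `tr_{R_c}` has diagonal
entries indexed by the basis `ε_d^k e_i` (`0 ≤ k < d/c`), and the residues pick
the coefficients of `ε_d^{d-1}`, resp. `ε_c^{c-1}`. -/
theorem stmt2 (c d n : ℕ) (hc : 0 < c) (hcd : c ∣ d)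
    (Z Z' : (Fin n → Rmod d) →ₗ[ℂ] (Fin n → Rmod d))
    (hZ : ∀ v, Z (eps d ^ (d / c) • v) = eps d ^ (d / c) • Z v)
    (hZ' : ∀ v, Z' (eps d • v) = eps d • Z' v) :
    -- `⟨pr_{c,d}(Z), Z'⟩_d` :
    (∑ i : Fin n, coeffD d (d - 1)
        ((∑ k ∈ Finset.range (d / c),
            eps d ^ k • Z (eps d ^ (d / c - 1 - k) • Z' ((Pi.single i 1 : Fin n → Rmod d)))) i))
    -- `⟨Z, Z'⟩_c` :
    = ∑ i : Fin n, ∑ k ∈ Finset.range (d / c),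
        coeffD d (k + (c - 1) * (d / c))
          ((Z (Z' (eps d ^ k • (Pi.single i 1 : Fin n → Rmod d)))) i) := by
  rcases Nat.eq_zero_or_pos d with hd | hd
  · subst hd
    simp [Nat.zero_div, coeffD]
  · set m := d / c with hm
    have hdm : c * m = d := Nat.mul_div_cancel' hcd
    have hm1 : 1 ≤ m := Nat.div_pos (Nat.le_of_dvd hd hcd) hc
    have h1 : (c - 1) * m = d - m := by rw [Nat.sub_one_mul, hdm]
    have hZ'pow : ∀ (k : ℕ) (v), Z' (eps d ^ k • v) = eps d ^ k • Z' v := by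
      intro k
      induction k with
      | zero => intro v; simp
      | succ k ih =>
        intro v
        rw [pow_succ, mul_comm, mul_smul, hZ', ih, ← mul_smul, mul_comm]
    refine Finset.sum_congr rfl fun i _ => ?_
    rw [Finset.sum_apply, coeffD_sum]
    conv_rhs => rw [← Finset.sum_range_reflect]
    refine Finset.sum_congr rfl fun k hk => ?_
    simp only [Finset.mem_range] at hk
    have hmd : m ≤ d := Nat.div_le_self d c
    rw [hZ'pow, Pi.smul_apply, smul_eq_mul,
      coeffD_pow_mul d (d - 1) k (by omega) (by omega)]
    congr 1
    omega
end

section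
/- Let ℬ be data of linear maps B_{i+1,i}: V_i⊗R_d → V_{i+1}⊗R_d and B_{i,i+1}: V_{i+1}⊗R_d → V_i⊗R_d (R_d-linear, for i = 0,…,l-1, with V_0 = V) satisfying the moment map relations B_{i,i-1}B_{i-1,i} - B_{i,i+1}B_{i+1,i} = -λ_i Id for i = 1,…,l (with B_{l,l+1} = B_{l+1,l} = 0), where λ_i = θ_i - θ_{i-1} for elements θ_0,…,θ_l ∈ R_d with θ_i - θ_j a unit for i ≠ j. Set A := -B_{0,1}B_{1,0} + θ_0 Id and B_{0,i} := B_{0,1}⋯B_{i-1,i}. Then (-A + θ_i Id) B_{0,i} = B_{0,i+1} B_{i+1,i} for i = 0,…,l-1, and (-A + θ_l Id) B_{0,l} = 0; consequently ∏_{j=0}^{l}(-A + θ_j Id) = 0. -/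
open Polynomial Finset

/-- leg moment-map relations.  Given `R_d`-linear maps
`Bup i = B_{i+1,i} : V_i ⊗ R_d → V_{i+1} ⊗ R_d` and
`Bdn i = B_{i,i+1} : V_{i+1} ⊗ R_d → V_i ⊗ R_d` (with `V_0 = V`, `V_i = R_d^{v i}`)
satisfying `B_{i,i-1}B_{i-1,i} - B_{i,i+1}B_{i+1,i} = -λ_i Id` for `1 ≤ i ≤ l`
(`λ_i = θ_i - θ_{i-1}`, `B_{l,l+1} = B_{l+1,l} = 0`), and setting
`A = -B_{0,1}B_{1,0} + θ_0 Id` and `B_{0,i} = B_{0,1} ⋯ B_{i-1,i}`, one has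
`(-A + θ_i Id) B_{0,i} = B_{0,i+1} B_{i+1,i}` for `0 ≤ i < l`,
`(-A + θ_l Id) B_{0,l} = 0`, and consequently `∏_{j=0}^{l} (-A + θ_j Id) = 0`. -/
theorem stmt9 (d l : ℕ) (hd : 0 < d) (hl : 0 < l)
    (v : ℕ → ℕ)
    (θ : ℕ → Rmod d)
    (hθ : ∀ i j, i ≤ l → j ≤ l → i ≠ j → IsUnit (θ i - θ j))
    (Bup : ∀ i : ℕ, (Fin (v i) → Rmod d) →ₗ[Rmod d] (Fin (v (i + 1)) → Rmod d))
    (Bdn : ∀ i : ℕ, (Fin (v (i + 1)) → Rmod d) →ₗ[Rmod d] (Fin (v i) → Rmod d))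
    (hBupl : Bup l = 0) (hBdnl : Bdn l = 0)
    (hmom : ∀ i : ℕ, i + 1 ≤ l →
      Bup i ∘ₗ Bdn i - Bdn (i + 1) ∘ₗ Bup (i + 1)
        = -((θ (i + 1) - θ i) • LinearMap.id))
    (B0 : ∀ i : ℕ, (Fin (v i) → Rmod d) →ₗ[Rmod d] (Fin (v 0) → Rmod d))
    (hB00 : B0 0 = LinearMap.id)
    (hB0succ : ∀ i : ℕ, B0 (i + 1) = B0 i ∘ₗ Bdn i) :
    (∀ i : ℕ, i < l →
        (θ i • LinearMap.id - (θ 0 • LinearMap.id - Bdn 0 ∘ₗ Bup 0)) ∘ₗ B0 i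
          = B0 (i + 1) ∘ₗ Bup i)
    ∧ ((θ l • LinearMap.id - (θ 0 • LinearMap.id - Bdn 0 ∘ₗ Bup 0)) ∘ₗ B0 l = 0)
    ∧ Polynomial.aeval
        ((θ 0 • LinearMap.id - Bdn 0 ∘ₗ Bup 0) :
          Module.End (Rmod d) (Fin (v 0) → Rmod d))
        (∏ j ∈ Finset.range (l + 1), (C (θ j) - X)) = 0 := by
  set A : Module.End (Rmod d) (Fin (v 0) → Rmod d) :=
    θ 0 • LinearMap.id - Bdn 0 ∘ₗ Bup 0 with hA
  have key : ∀ i : ℕ, i ≤ l →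
      (θ i • (LinearMap.id : Module.End (Rmod d) (Fin (v 0) → Rmod d)) - A) ∘ₗ B0 i
        = B0 (i + 1) ∘ₗ Bup i := by
    intro i
    induction i with
    | zero =>
      intro _
      rw [hB0succ 0, hB00, LinearMap.comp_id, LinearMap.id_comp, hA,
        sub_sub_cancel]
    | succ i ih =>
      intro h
      have ihh := ih (Nat.le_of_succ_le h)
      have hm := hmom i h
      have hm2 : Bup i ∘ₗ Bdn i
          = -((θ (i + 1) - θ i) • LinearMap.id) + Bdn (i + 1) ∘ₗ Bup (i + 1) :=
        sub_eq_iff_eq_add.mp hm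
      have e1 : (θ (i + 1) • (LinearMap.id : Module.End (Rmod d) (Fin (v 0) → Rmod d)) - A)
          = (θ i • LinearMap.id - A) + (θ (i + 1) - θ i) • LinearMap.id := by
        ext x; simp [sub_smul]
      calc (θ (i + 1) • (LinearMap.id : Module.End (Rmod d) (Fin (v 0) → Rmod d)) - A)
            ∘ₗ B0 (i + 1)
          = ((θ i • LinearMap.id - A) ∘ₗ B0 (i + 1))
              + (θ (i + 1) - θ i) • B0 (i + 1) := by
            rw [e1, LinearMap.add_comp, LinearMap.smul_comp, LinearMap.id_comp]
        _ = (B0 (i + 1) ∘ₗ (Bup i ∘ₗ Bdn i)) + (θ (i + 1) - θ i) • B0 (i + 1) := by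
            rw [hB0succ i, ← LinearMap.comp_assoc, ihh, LinearMap.comp_assoc, ← hB0succ i]
        _ = B0 (i + 2) ∘ₗ Bup (i + 1) := by
            rw [hm2, LinearMap.comp_add, hB0succ (i + 1), LinearMap.comp_assoc]
            have : B0 (i + 1) ∘ₗ (-((θ (i + 1) - θ i) • LinearMap.id))
                = -((θ (i + 1) - θ i) • B0 (i + 1)) := by
              ext x; simp
            rw [this]; abel
  refine ⟨fun i hi => key i hi.le, ?_, ?_⟩
  · rw [key l le_rfl, hBupl, LinearMap.comp_zero]
  · have prod_claim : ∀ i : ℕ, i ≤ l →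
        ∃ U : (Fin (v 0) → Rmod d) →ₗ[Rmod d] (Fin (v i) → Rmod d),
          Polynomial.aeval A (∏ j ∈ Finset.range (i + 1), (C (θ j) - X))
            = B0 (i + 1) ∘ₗ (Bup i ∘ₗ U) := by
      intro i
      induction i with
      | zero =>
        intro _
        refine ⟨LinearMap.id, ?_⟩
        have h0 := key 0 (Nat.zero_le l)
        rw [hB00, LinearMap.comp_id] at h0
        rw [Finset.prod_range_one, map_sub, Polynomial.aeval_X, Polynomial.aeval_C,
          LinearMap.comp_id]
        rw [← h0]
        congr 1
      | succ i ih =>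
        intro h
        obtain ⟨U, hU⟩ := ih (Nat.le_of_succ_le h)
        refine ⟨Bup i ∘ₗ U, ?_⟩
        have hmulcomm : (∏ j ∈ Finset.range (i + 2), (C (θ j) - X))
            = (C (θ (i + 1)) - X) * ∏ j ∈ Finset.range (i + 1), (C (θ j) - X) := by
          rw [Finset.prod_range_succ, mul_comm]
        rw [hmulcomm, map_mul, hU]
        have haev : Polynomial.aeval A (C (θ (i + 1)) - X)
            = θ (i + 1) • (LinearMap.id : Module.End (Rmod d) (Fin (v 0) → Rmod d)) - A := by
          rw [map_sub, Polynomial.aeval_X, Polynomial.aeval_C]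
          congr 1
        rw [haev, Module.End.mul_eq_comp, ← LinearMap.comp_assoc,
          key (i + 1) h, LinearMap.comp_assoc]
    obtain ⟨U, hU⟩ := prod_claim l le_rfl
    rw [hU, hBupl, LinearMap.zero_comp, LinearMap.comp_zero]
end

section
/- In the setting of the leg moment-map relations (previous item), for each i = 0,…,l-1 one has B_{0,i+1}B_{i+1,0} = ∏_{j=0}^{i}(-A + θ_j Id), where B_{i,0} := B_{i,i-1}⋯B_{2,1}B_{1,0} and A = -B_{0,1}B_{1,0} + θ_0 Id. -/
open Polynomial Finset

section Aux
variable {R V W : Type*} [CommRing R] [AddCommGroup V] [Module R V]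
  [AddCommGroup W] [Module R W]

lemma pow_intertwine (f : V →ₗ[R] W) (g : W →ₗ[R] V) (n : ℕ) :
    g ∘ₗ (((f ∘ₗ g : Module.End R W)) ^ n)
      = (((g ∘ₗ f : Module.End R V)) ^ n) ∘ₗ g := by
  induction n with
  | zero => rw [pow_zero, pow_zero]; rfl
  | succ n ih =>
    rw [pow_succ, pow_succ, Module.End.mul_eq_comp, Module.End.mul_eq_comp]
    calc g ∘ₗ (((f ∘ₗ g) ^ n) ∘ₗ (f ∘ₗ g))
        = (g ∘ₗ ((f ∘ₗ g) ^ n)) ∘ₗ (f ∘ₗ g) := by rw [LinearMap.comp_assoc]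
      _ = (((g ∘ₗ f) ^ n) ∘ₗ g) ∘ₗ (f ∘ₗ g) := by rw [ih]
      _ = (((g ∘ₗ f) ^ n) ∘ₗ (g ∘ₗ f)) ∘ₗ g := by
          simp only [LinearMap.comp_assoc]

lemma aeval_intertwine (f : V →ₗ[R] W) (g : W →ₗ[R] V) (p : R[X]) :
    g ∘ₗ (aeval (f ∘ₗ g : Module.End R W) p)
      = (aeval (g ∘ₗ f : Module.End R V) p) ∘ₗ g := by
  induction p using Polynomial.induction_on' with
  | add p q hp hq => simp only [map_add, LinearMap.comp_add, LinearMap.add_comp, hp, hq]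
  | monomial n a =>
    simp only [aeval_monomial, Module.algebraMap_end_eq_smul_id]
    rw [Module.End.mul_eq_comp, Module.End.mul_eq_comp]
    simp only [LinearMap.smul_comp, LinearMap.comp_smul, LinearMap.id_comp,
      LinearMap.comp_id]
    rw [pow_intertwine]
end Aux

set_option maxHeartbeats 1000000 in
/-- in the setting of the leg moment-map relations, with
`B_{0,i} = B_{0,1} ⋯ B_{i-1,i}`, `B_{i,0} = B_{i,i-1} ⋯ B_{1,0}` and
`A = -B_{0,1}B_{1,0} + θ_0 Id`, one has
`B_{0,i+1} B_{i+1,0} = ∏_{j=0}^{i} (-A + θ_j Id)` for each `i = 0,…,l-1`. -/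
theorem stmt10 (d l : ℕ) (hd : 0 < d) (hl : 0 < l)
    (v : ℕ → ℕ)
    (θ : ℕ → Rmod d)
    (hθ : ∀ i j, i ≤ l → j ≤ l → i ≠ j → IsUnit (θ i - θ j))
    (Bup : ∀ i : ℕ, (Fin (v i) → Rmod d) →ₗ[Rmod d] (Fin (v (i + 1)) → Rmod d))
    (Bdn : ∀ i : ℕ, (Fin (v (i + 1)) → Rmod d) →ₗ[Rmod d] (Fin (v i) → Rmod d))
    (hBupl : Bup l = 0) (hBdnl : Bdn l = 0)
    (hmom : ∀ i : ℕ, i + 1 ≤ l →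
      Bup i ∘ₗ Bdn i - Bdn (i + 1) ∘ₗ Bup (i + 1)
        = -((θ (i + 1) - θ i) • LinearMap.id))
    (B0 : ∀ i : ℕ, (Fin (v i) → Rmod d) →ₗ[Rmod d] (Fin (v 0) → Rmod d))
    (hB00 : B0 0 = LinearMap.id)
    (hB0succ : ∀ i : ℕ, B0 (i + 1) = B0 i ∘ₗ Bdn i)
    (Bto : ∀ i : ℕ, (Fin (v 0) → Rmod d) →ₗ[Rmod d] (Fin (v i) → Rmod d))
    (hBto0 : Bto 0 = LinearMap.id)
    (hBtosucc : ∀ i : ℕ, Bto (i + 1) = Bup i ∘ₗ Bto i) :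
    ∀ i : ℕ, i < l →
      B0 (i + 1) ∘ₗ Bto (i + 1)
        = Polynomial.aeval
            ((θ 0 • LinearMap.id - Bdn 0 ∘ₗ Bup 0) :
              Module.End (Rmod d) (Fin (v 0) → Rmod d))
            (∏ j ∈ Finset.range (i + 1), (C (θ j) - X)) := by
  set A : Module.End (Rmod d) (Fin (v 0) → Rmod d) :=
    θ 0 • LinearMap.id - Bdn 0 ∘ₗ Bup 0 with hA
  have hA0 : aeval A (C (θ 0) - X)
      = (Bdn 0 ∘ₗ Bup 0 : Module.End (Rmod d) (Fin (v 0) → Rmod d)) := by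
    rw [map_sub, aeval_C, aeval_X, Module.algebraMap_end_eq_smul_id, hA]
    abel
  have key : ∀ i, i ≤ l → ∀ q : (Rmod d)[X],
      B0 i ∘ₗ (aeval (Bdn i ∘ₗ Bup i :
          Module.End (Rmod d) (Fin (v i) → Rmod d)) q) ∘ₗ Bto i
        = aeval A ((∏ j ∈ Finset.range i, (C (θ j) - X))
            * q.comp (C (θ i) - X)) := by
    intro i
    induction i with
    | zero =>
      intro _ q
      rw [hB00, hBto0, LinearMap.comp_id, LinearMap.id_comp,
        Finset.range_zero, Finset.prod_empty, one_mul, aeval_comp, hA0]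
    | succ k ih =>
      intro hk q
      have hM : (Bdn (k + 1) ∘ₗ Bup (k + 1) :
            Module.End (Rmod d) (Fin (v (k + 1)) → Rmod d))
          = (Bup k ∘ₗ Bdn k) + (θ (k + 1) - θ k) • LinearMap.id := by
        have h := hmom k hk
        have h2 : (Bdn (k + 1) ∘ₗ Bup (k + 1) :
              Module.End (Rmod d) (Fin (v (k + 1)) → Rmod d))
            = (Bup k ∘ₗ Bdn k)
              - ((Bup k ∘ₗ Bdn k) - Bdn (k + 1) ∘ₗ Bup (k + 1)) := by abel
        rw [h2, h]; abel
      have haevalM : (aeval (Bdn (k + 1) ∘ₗ Bup (k + 1) :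
            Module.End (Rmod d) (Fin (v (k + 1)) → Rmod d)) q)
          = aeval (Bup k ∘ₗ Bdn k :
              Module.End (Rmod d) (Fin (v (k + 1)) → Rmod d))
              (q.comp (X + C (θ (k + 1) - θ k))) := by
        rw [aeval_comp]
        congr 1
        rw [map_add, aeval_X, aeval_C, Module.algebraMap_end_eq_smul_id, hM]
      set r : (Rmod d)[X] := q.comp (X + C (θ (k + 1) - θ k)) with hr
      have hsand : B0 (k + 1) ∘ₗ (aeval (Bdn (k + 1) ∘ₗ Bup (k + 1) :
            Module.End (Rmod d) (Fin (v (k + 1)) → Rmod d)) q) ∘ₗ Bto (k + 1)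
          = B0 k ∘ₗ (aeval (Bdn k ∘ₗ Bup k :
              Module.End (Rmod d) (Fin (v k) → Rmod d)) (r * X)) ∘ₗ Bto k := by
        rw [haevalM, hB0succ, hBtosucc, map_mul, aeval_X, Module.End.mul_eq_comp]
        calc (B0 k ∘ₗ Bdn k) ∘ₗ (aeval (Bup k ∘ₗ Bdn k :
              Module.End (Rmod d) (Fin (v (k + 1)) → Rmod d)) r) ∘ₗ (Bup k ∘ₗ Bto k)
            = B0 k ∘ₗ ((Bdn k ∘ₗ (aeval (Bup k ∘ₗ Bdn k :
                Module.End (Rmod d) (Fin (v (k + 1)) → Rmod d)) r)) ∘ₗ (Bup k ∘ₗ Bto k)) := by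
              simp only [LinearMap.comp_assoc]
          _ = B0 k ∘ₗ (((aeval (Bdn k ∘ₗ Bup k :
                Module.End (Rmod d) (Fin (v k) → Rmod d)) r) ∘ₗ Bdn k) ∘ₗ (Bup k ∘ₗ Bto k)) := by
              rw [aeval_intertwine]
          _ = _ := by simp only [LinearMap.comp_assoc]
      rw [hsand, ih (Nat.le_of_succ_le hk) (r * X)]
      congr 1
      have hcomp : r.comp (C (θ k) - X) = q.comp (C (θ (k + 1)) - X) := by
        rw [hr, Polynomial.comp_assoc]
        congr 1
        simp only [add_comp, X_comp, C_comp]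
        rw [sub_add_eq_add_sub, ← C_add,
          show θ k + (θ (k + 1) - θ k) = θ (k + 1) by ring]
      rw [Finset.prod_range_succ, mul_comp, X_comp, hcomp]
      ring
  intro i hi
  have h := key i (le_of_lt hi) X
  rw [aeval_X, X_comp] at h
  rw [hB0succ, hBtosucc, Finset.prod_range_succ]
  calc (B0 i ∘ₗ Bdn i) ∘ₗ (Bup i ∘ₗ Bto i)
      = B0 i ∘ₗ ((Bdn i ∘ₗ Bup i) ∘ₗ Bto i) := by simp only [LinearMap.comp_assoc]
    _ = _ := h
end

section
/- Fix a symmetrizable generalized Cartan matrix 𝐂 = (c_{ij})_{i,j∈I} with symmetrizer D = diag(d_i), d_{ij} = gcd(d_i,d_j), f_{ij} = d_j/d_{ij}. Define Ĩ = {(i,k) : i ∈ I, 0 ≤ k < d_i} and the Ĩ×Ĩ matrix 𝐂̃ with entries c̃_{(i,k)(j,l)} = c_{ij} if k = f_{ji}m and l = f_{ij}m for some integer m, and 0 otherwise. Then 𝐂̃ is a symmetrizable generalized Cartan matrix with symmetrizer diag(d̃_{(i,k)}) where d̃_{(i,k)} = d_i. -/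
/-- given a symmetrizable GCM `𝐂` with symmetrizer `diag(d_i)`,
the matrix `𝐂̃` on `Ĩ = {(i,k) : i ∈ I, 0 ≤ k < d_i}` with
`c̃_{(i,k)(j,l)} = c_{ij}` if `k = f_{ji} m` and `l = f_{ij} m` for some `m`
(where `f_{ij} = d_j / gcd(d_i,d_j)`) and `c̃ = 0` otherwise, is again a
symmetrizable generalized Cartan matrix, with symmetrizer `d̃_{(i,k)} = d_i`. -/
theorem stmt13 {I : Type} [Fintype I] [DecidableEq I]
    (C : I → I → ℤ) (d : I → ℕ) (hd : ∀ i, 0 < d i)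
    (hC2 : ∀ i, C i i = 2) (hCneg : ∀ i j, i ≠ j → C i j ≤ 0)
    (hsym : ∀ i j, (d i : ℤ) * C i j = (d j : ℤ) * C j i)
    (Ct : (Σ i : I, Fin (d i)) → (Σ i : I, Fin (d i)) → ℤ)
    (hCt1 : ∀ (i j : I) (k : Fin (d i)) (l : Fin (d j)),
      (∃ m : ℕ, (k : ℕ) = (d i / Nat.gcd (d j) (d i)) * m
          ∧ (l : ℕ) = (d j / Nat.gcd (d i) (d j)) * m) →
      Ct ⟨i, k⟩ ⟨j, l⟩ = C i j)
    (hCt0 : ∀ (i j : I) (k : Fin (d i)) (l : Fin (d j)),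
      ¬(∃ m : ℕ, (k : ℕ) = (d i / Nat.gcd (d j) (d i)) * m
          ∧ (l : ℕ) = (d j / Nat.gcd (d i) (d j)) * m) →
      Ct ⟨i, k⟩ ⟨j, l⟩ = 0) :
    (∀ x, Ct x x = 2)
    ∧ (∀ x y, x ≠ y → Ct x y ≤ 0)
    ∧ (∀ x y, Ct x y = 0 ↔ Ct y x = 0)
    ∧ (∀ (i j : I) (k : Fin (d i)) (l : Fin (d j)),
        (d i : ℤ) * Ct ⟨i, k⟩ ⟨j, l⟩ = (d j : ℤ) * Ct ⟨j, l⟩ ⟨i, k⟩) := by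

  have hswap : ∀ (i j : I) (k : Fin (d i)) (l : Fin (d j)),
      (∃ m : ℕ, (k : ℕ) = (d i / Nat.gcd (d j) (d i)) * m
          ∧ (l : ℕ) = (d j / Nat.gcd (d i) (d j)) * m) →
      (∃ m : ℕ, (l : ℕ) = (d j / Nat.gcd (d i) (d j)) * m
          ∧ (k : ℕ) = (d i / Nat.gcd (d j) (d i)) * m) := by
    rintro i j k l ⟨m, h1, h2⟩; exact ⟨m, h2, h1⟩
  have hzero : ∀ i j, C i j = 0 ↔ C j i = 0 := by
    intro i j
    constructor <;> intro h
    · have := hsym i j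
      rw [h, mul_zero] at this
      exact (mul_eq_zero.mp this.symm).resolve_left (by
        exact_mod_cast (hd j).ne')
    · have := hsym j i
      rw [h, mul_zero] at this
      exact (mul_eq_zero.mp this.symm).resolve_left (by
        exact_mod_cast (hd i).ne')
  refine ⟨?_, ?_, ?_, ?_⟩
  · rintro ⟨i, k⟩
    rw [hCt1 i i k k ⟨k, by simp [Nat.gcd_self, Nat.div_self (hd i)],
      by simp [Nat.gcd_self, Nat.div_self (hd i)]⟩, hC2]
  · rintro ⟨i, k⟩ ⟨j, l⟩ hne
    by_cases h : ∃ m : ℕ, (k : ℕ) = (d i / Nat.gcd (d j) (d i)) * m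
        ∧ (l : ℕ) = (d j / Nat.gcd (d i) (d j)) * m
    · rw [hCt1 i j k l h]
      by_cases hij : i = j
      · subst hij
        exfalso
        obtain ⟨m, h1, h2⟩ := h
        rw [Nat.gcd_self, Nat.div_self (hd i), one_mul] at h1 h2
        exact hne (by rw [show k = l from Fin.ext (h1.trans h2.symm)])
      · exact hCneg i j hij
    · rw [hCt0 i j k l h]
  · rintro ⟨i, k⟩ ⟨j, l⟩
    by_cases h : ∃ m : ℕ, (k : ℕ) = (d i / Nat.gcd (d j) (d i)) * m
        ∧ (l : ℕ) = (d j / Nat.gcd (d i) (d j)) * m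
    · rw [hCt1 i j k l h, hCt1 j i l k (hswap i j k l h)]
      exact hzero i j
    · rw [hCt0 i j k l h, hCt0 j i l k (fun hc => h (hswap j i l k hc))]
  · intro i j k l
    by_cases h : ∃ m : ℕ, (k : ℕ) = (d i / Nat.gcd (d j) (d i)) * m
        ∧ (l : ℕ) = (d j / Nat.gcd (d i) (d j)) * m
    · rw [hCt1 i j k l h, hCt1 j i l k (hswap i j k l h)]
      exact hsym i j
    · rw [hCt0 i j k l h, hCt0 j i l k (fun hc => h (hswap j i l k hc)), mul_zero, mul_zero]
end

section
/- Fix a symmetrizable GCM 𝐂 with symmetrizer D. For each i ∈ I define the linear map r_i on R_𝐝 = ⊕_{j∈I} ℂ[ε_j]/(ε_j^{d_j}) by r_i(λ)_i = -λ_i and r_i(λ)_j = λ_j − Σ_{l=0}^{d_{ij}-1} λ_{i, d_i − (d_i/d_{ij})l − 1} c_{ij} ε_j^{d_j − (d_j/d_{ij})l − 1} for j ≠ i, where λ_i = Σ_k λ_{i,k} ε_i^k. Then the maps r_i satisfy the Coxeter relations of the Weyl group W(𝐂): r_i² = Id, and (r_i r_j)^{m_{ij}} = Id for i ≠ j, where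 m_{ij} = 2, 3, 4, 6 according as c_{ij}c_{ji} = 0, 1, 2, 3 (and no relation if c_{ij}c_{ji} ≥ 4). -/
open Finset

/-- The reflection `r_i` acting on `R_𝐝 = ⊕_j ℂ[ε_j]/(ε_j^{d_j})`, written in
coordinates: an element `λ = (λ_j)` is recorded by its coefficients
`λ_{j,k}` (`0 ≤ k < d_j`).  One has `r_i(λ)_i = -λ_i` and, for `j ≠ i`,
`r_i(λ)_j = λ_j - Σ_{l=0}^{d_{ij}-1} λ_{i, d_i - (d_i/d_{ij})l - 1} c_{ij}
ε_j^{d_j - (d_j/d_{ij})l - 1}`. -/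
noncomputable def wrefl {I : Type} [DecidableEq I] (d : I → ℕ)
    (hd : ∀ i, 0 < d i) (c : I → I → ℤ) (i : I)
    (lam : ∀ j, Fin (d j) → ℂ) : ∀ j, Fin (d j) → ℂ :=
  fun j k =>
    if j = i then -lam j k
    else
      lam j k - ∑ l ∈ Finset.range (Nat.gcd (d i) (d j)),
        if (k : ℕ) = d j - 1 - (d j / Nat.gcd (d i) (d j)) * l then
          (c i j : ℂ) *
            lam i ⟨d i - 1 - (d i / Nat.gcd (d i) (d j)) * l, by
              have := hd i; omega⟩
        else 0

lemma wrefl_same {I : Type} [DecidableEq I] (d : I → ℕ) (hd : ∀ i, 0 < d i)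
    (c : I → I → ℤ) (i : I) (lam : ∀ j, Fin (d j) → ℂ) (k : Fin (d i)) :
    wrefl d hd c i lam i k = -lam i k := by simp [wrefl]

lemma wrefl_other {I : Type} [DecidableEq I] (d : I → ℕ) (hd : ∀ i, 0 < d i)
    (c : I → I → ℤ) {i j : I} (h : j ≠ i) (lam : ∀ j, Fin (d j) → ℂ) (k : Fin (d j)) :
    wrefl d hd c i lam j k = lam j k - ∑ l ∈ Finset.range (Nat.gcd (d i) (d j)),
        (if (k : ℕ) = d j - 1 - (d j / Nat.gcd (d i) (d j)) * l then
          (c i j : ℂ) *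
            lam i ⟨d i - 1 - (d i / Nat.gcd (d i) (d j)) * l, by
              have := hd i; omega⟩
        else 0) := by simp [wrefl, h]

lemma sum_ite_neg (g : ℕ) (P : ℕ → Prop) [DecidablePred P] (f : ℕ → ℂ) :
    ∑ l ∈ range g, (if P l then -f l else 0) = -∑ l ∈ range g, (if P l then f l else 0) := by
  rw [← Finset.sum_neg_distrib]
  exact Finset.sum_congr rfl fun l _ => by split <;> simp

noncomputable def ps (cc cc' : ℂ) (v : ℂ × ℂ) : ℂ × ℂ :=
  (-v.1 + cc' * v.2, -cc * v.1 + (cc * cc' - 1) * v.2)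

lemma ps0_iter (cc cc' : ℂ) (h : cc = 0) (h' : cc' = 0) (v : ℂ × ℂ) :
    (ps cc cc')^[2] v = v := by
  subst h h'; simp [ps, Function.iterate_succ_apply']
lemma ps0_sum1 (cc cc' : ℂ) (h : cc = 0) (h' : cc' = 0) (v : ℂ × ℂ) :
    ∑ t ∈ range 2, ((ps cc cc')^[t] v).1 = 0 := by
  subst h h'; simp [ps, Finset.sum_range_succ, Function.iterate_succ_apply']
lemma ps0_sum2 (cc cc' : ℂ) (h : cc = 0) (h' : cc' = 0) (v : ℂ × ℂ) :
    ∑ t ∈ range 2, ((ps cc cc')^[t] v).2 = 0 := by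
  subst h h'; simp [ps, Finset.sum_range_succ, Function.iterate_succ_apply']

lemma ps1_iter (cc cc' : ℂ) (h : cc * cc' = 1) (v : ℂ × ℂ) :
    (ps cc cc')^[3] v = v := by
  rw [Prod.ext_iff]
  simp only [Function.iterate_succ_apply', Function.iterate_zero_apply, ps]
  constructor
  · linear_combination (((2:ℂ) + (-1:ℂ)*cc*cc') * v.1 + ((-3:ℂ)*cc' + cc*cc'^2) * v.2) * h
  · linear_combination (((3:ℂ)*cc + (-1:ℂ)*cc^2*cc') * v.1 + ((2:ℂ) + (-4:ℂ)*cc*cc' + cc^2*cc'^2) * v.2) * h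
lemma ps1_sum1 (cc cc' : ℂ) (h : cc * cc' = 1) (v : ℂ × ℂ) :
    ∑ t ∈ range 3, ((ps cc cc')^[t] v).1 = 0 := by
  simp only [Finset.sum_range_succ, Finset.sum_range_zero,
    Function.iterate_succ_apply', Function.iterate_zero_apply, ps]
  linear_combination ((-1:ℂ) * v.1 + cc' * v.2) * h
lemma ps1_sum2 (cc cc' : ℂ) (h : cc * cc' = 1) (v : ℂ × ℂ) :
    ∑ t ∈ range 3, ((ps cc cc')^[t] v).2 = 0 := by
  simp only [Finset.sum_range_succ, Finset.sum_range_zero,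
    Function.iterate_succ_apply', Function.iterate_zero_apply, ps]
  linear_combination ((-1:ℂ)*cc * v.1 + ((-1:ℂ) + cc*cc') * v.2) * h

lemma ps2_iter (cc cc' : ℂ) (h : cc * cc' = 2) (v : ℂ × ℂ) :
    (ps cc cc')^[4] v = v := by
  rw [Prod.ext_iff]
  simp only [Function.iterate_succ_apply', Function.iterate_zero_apply, ps]
  constructor
  · linear_combination (((3:ℂ)*cc*cc' + (-1:ℂ)*cc^2*cc'^2) * v.1
      + ((2:ℂ)*cc' + (-4:ℂ)*cc*cc'^2 + cc^2*cc'^3) * v.2) * h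
  · linear_combination (((-2:ℂ)*cc + (4:ℂ)*cc^2*cc' + (-1:ℂ)*cc^3*cc'^2) * v.1
      + ((5:ℂ)*cc*cc' + (-5:ℂ)*cc^2*cc'^2 + cc^3*cc'^3) * v.2) * h
lemma ps2_sum1 (cc cc' : ℂ) (h : cc * cc' = 2) (v : ℂ × ℂ) :
    ∑ t ∈ range 4, ((ps cc cc')^[t] v).1 = 0 := by
  simp only [Finset.sum_range_succ, Finset.sum_range_zero,
    Function.iterate_succ_apply', Function.iterate_zero_apply, ps]
  linear_combination ((-1:ℂ)*cc*cc' * v.1 + ((-1:ℂ)*cc' + cc*cc'^2) * v.2) * h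
lemma ps2_sum2 (cc cc' : ℂ) (h : cc * cc' = 2) (v : ℂ × ℂ) :
    ∑ t ∈ range 4, ((ps cc cc')^[t] v).2 = 0 := by
  simp only [Finset.sum_range_succ, Finset.sum_range_zero,
    Function.iterate_succ_apply', Function.iterate_zero_apply, ps]
  linear_combination ((cc + (-1:ℂ)*cc^2*cc') * v.1 + ((-2:ℂ)*cc*cc' + cc^2*cc'^2) * v.2) * h

lemma ps3_iter (cc cc' : ℂ) (h : cc * cc' = 3) (v : ℂ × ℂ) :
    (ps cc cc')^[6] v = v := by
  rw [Prod.ext_iff]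
  simp only [Function.iterate_succ_apply', Function.iterate_zero_apply, ps]
  constructor
  · linear_combination (((5:ℂ)*cc*cc' + (-10:ℂ)*cc^2*cc'^2 + (6:ℂ)*cc^3*cc'^3 + (-1:ℂ)*cc^4*cc'^4) * v.1
      + ((2:ℂ)*cc' + (-11:ℂ)*cc*cc'^2 + (15:ℂ)*cc^2*cc'^3 + (-7:ℂ)*cc^3*cc'^4 + cc^4*cc'^5) * v.2) * h
  · linear_combination (((-2:ℂ)*cc + (11:ℂ)*cc^2*cc' + (-15:ℂ)*cc^3*cc'^2 + (7:ℂ)*cc^4*cc'^3 + (-1:ℂ)*cc^5*cc'^4) * v.1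
      + ((7:ℂ)*cc*cc' + (-21:ℂ)*cc^2*cc'^2 + (21:ℂ)*cc^3*cc'^3 + (-8:ℂ)*cc^4*cc'^4 + cc^5*cc'^5) * v.2) * h
lemma ps3_sum1 (cc cc' : ℂ) (h : cc * cc' = 3) (v : ℂ × ℂ) :
    ∑ t ∈ range 6, ((ps cc cc')^[t] v).1 = 0 := by
  simp only [Finset.sum_range_succ, Finset.sum_range_zero,
    Function.iterate_succ_apply', Function.iterate_zero_apply, ps]
  linear_combination (((-2:ℂ)*cc*cc' + (3:ℂ)*cc^2*cc'^2 + (-1:ℂ)*cc^3*cc'^3) * v.1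
    + ((-1:ℂ)*cc' + (4:ℂ)*cc*cc'^2 + (-4:ℂ)*cc^2*cc'^3 + cc^3*cc'^4) * v.2) * h
lemma ps3_sum2 (cc cc' : ℂ) (h : cc * cc' = 3) (v : ℂ × ℂ) :
    ∑ t ∈ range 6, ((ps cc cc')^[t] v).2 = 0 := by
  simp only [Finset.sum_range_succ, Finset.sum_range_zero,
    Function.iterate_succ_apply', Function.iterate_zero_apply, ps]
  linear_combination ((cc + (-4:ℂ)*cc^2*cc' + (4:ℂ)*cc^3*cc'^2 + (-1:ℂ)*cc^4*cc'^3) * v.1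
    + ((-3:ℂ)*cc*cc' + (7:ℂ)*cc^2*cc'^2 + (-5:ℂ)*cc^3*cc'^3 + cc^4*cc'^4) * v.2) * h

theorem key {I : Type} [DecidableEq I] (d : I → ℕ) (hd : ∀ i, 0 < d i)
    (c : I → I → ℤ) (i j : I) (hij : i ≠ j) (m : ℕ)
    (hps1 : ∀ v : ℂ × ℂ, (ps (c i j) (c j i))^[m] v = v)
    (hps2 : ∀ v : ℂ × ℂ, ∑ t ∈ range m, ((ps (c i j) (c j i))^[t] v).1 = 0)
    (hps3 : ∀ v : ℂ × ℂ, ∑ t ∈ range m, ((ps (c i j) (c j i))^[t] v).2 = 0)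
    (hall : (d i / Nat.gcd (d i) (d j) = 1 ∧ d j / Nat.gcd (d i) (d j) = 1) ∨ Even m) :
    (wrefl d hd c i ∘ wrefl d hd c j)^[m] = id := by
  have hdi0 := hd i; have hdj0 := hd j
  set G := Nat.gcd (d i) (d j) with hG
  have hgc : Nat.gcd (d j) (d i) = G := by rw [hG, Nat.gcd_comm]
  set qi := d i / G with hqiE
  set qj := d j / G with hqjE
  have hG0 : 0 < G := Nat.gcd_pos_of_pos_left _ hdi0
  have hdi : qi * G = d i := Nat.div_mul_cancel (Nat.gcd_dvd_left _ _)
  have hdj : qj * G = d j := Nat.div_mul_cancel (Nat.gcd_dvd_right _ _)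
  have hqi : 0 < qi := Nat.div_pos (Nat.le_of_dvd hdi0 (Nat.gcd_dvd_left _ _)) hG0
  have hqj : 0 < qj := Nat.div_pos (Nat.le_of_dvd hdj0 (Nat.gcd_dvd_right _ _)) hG0
  have hbi : ∀ l, l < G → qi * l + qi ≤ d i := by
    intro l hl
    have h1 : qi * (l + 1) ≤ qi * G := Nat.mul_le_mul_left _ hl
    rw [Nat.mul_succ] at h1; omega
  have hbj : ∀ l, l < G → qj * l + qj ≤ d j := by
    intro l hl
    have h1 : qj * (l + 1) ≤ qj * G := Nat.mul_le_mul_left _ hl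
    rw [Nat.mul_succ] at h1; omega
  have hPi : ∀ l : ℕ, d i - 1 - qi * l < d i := fun l => by omega
  have hPj : ∀ l : ℕ, d j - 1 - qj * l < d j := fun l => by omega
  funext lam
  set F := wrefl d hd c i ∘ wrefl d hd c j with hF
  have hnu_j : ∀ (μ : ∀ k, Fin (d k) → ℂ) (q : Fin (d j)), wrefl d hd c j μ j q = -μ j q :=
    fun μ q => wrefl_same d hd c j μ q
  have hnu_i : ∀ (μ : ∀ k, Fin (d k) → ℂ) (l : ℕ), l < G →
      wrefl d hd c j μ i ⟨d i - 1 - qi * l, hPi l⟩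
        = μ i ⟨d i - 1 - qi * l, hPi l⟩ - (c j i : ℂ) * μ j ⟨d j - 1 - qj * l, hPj l⟩ := by
    intro μ l hl
    rw [wrefl_other d hd c hij]
    simp only [hgc, ← hqiE, ← hqjE]
    congr 1
    rw [Finset.sum_eq_single l]
    · rw [if_pos rfl]
    · intro b hb hbl
      rw [if_neg]
      intro hcond
      have hcond' : d i - 1 - qi * l = d i - 1 - qi * b := hcond
      have hb' := Finset.mem_range.1 hb
      have h1 := hbi l hl; have h2 := hbi b hb'
      have h3 : qi * l = qi * b := by omega
      exact hbl (Nat.eq_of_mul_eq_mul_left hqi h3).symm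
    · intro hl'; exact absurd (Finset.mem_range.2 hl) hl'
  have hnu_i' : ∀ (μ : ∀ k, Fin (d k) → ℂ) (p : Fin (d i)), ¬ qi ∣ (d i - 1 - (p : ℕ)) →
      wrefl d hd c j μ i p = μ i p := by
    intro μ p hp
    rw [wrefl_other d hd c hij]
    simp only [hgc, ← hqiE, ← hqjE]
    rw [Finset.sum_eq_zero, sub_zero]
    intro b hb
    rw [if_neg]
    intro hcond
    have hb' := Finset.mem_range.1 hb
    have h2 := hbi b hb'
    exact hp ⟨b, by omega⟩
  have hstep_i : ∀ (μ : ∀ k, Fin (d k) → ℂ) (p : Fin (d i)),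
      F μ i p = -(wrefl d hd c j μ i p) := by
    intro μ p
    show wrefl d hd c i (wrefl d hd c j μ) i p = _
    rw [wrefl_same]
  have hstep_j : ∀ (μ : ∀ k, Fin (d k) → ℂ) (q : Fin (d j)),
      F μ j q = -μ j q - ∑ l ∈ range G,
        (if (q : ℕ) = d j - 1 - qj * l then
          (c i j : ℂ) * (wrefl d hd c j μ) i ⟨d i - 1 - qi * l, hPi l⟩ else 0) := by
    intro μ q
    show wrefl d hd c i (wrefl d hd c j μ) j q = _
    rw [wrefl_other d hd c (Ne.symm hij)]
    simp only [← hG, ← hqiE, ← hqjE]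
    rw [hnu_j]
  have hstep_k : ∀ k, k ≠ i → k ≠ j → ∀ (μ : ∀ k, Fin (d k) → ℂ) (p : Fin (d k)),
      F μ k p = μ k p - (∑ l ∈ range (Nat.gcd (d j) (d k)),
          if (p : ℕ) = d k - 1 - d k / Nat.gcd (d j) (d k) * l then
            (c j k : ℂ) * μ j ⟨d j - 1 - d j / Nat.gcd (d j) (d k) * l, by have := hd j; omega⟩
          else 0)
        + (∑ l ∈ range (Nat.gcd (d i) (d k)),
          if (p : ℕ) = d k - 1 - d k / Nat.gcd (d i) (d k) * l then
            (c i k : ℂ) * (F μ) i ⟨d i - 1 - d i / Nat.gcd (d i) (d k) * l, by have := hd i; omega⟩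
          else 0) := by
    intro k hki hkj μ p
    show wrefl d hd c i (wrefl d hd c j μ) k p = _
    rw [wrefl_other d hd c hki, wrefl_other d hd c hkj]
    have hrw : ∀ q : Fin (d i), wrefl d hd c j μ i q = -(F μ i q) := by
      intro q; rw [hstep_i]; ring
    simp only [hrw, mul_neg]
    rw [sum_ite_neg]
    ring
  have main : ∀ t : ℕ,
      (∀ l, l < G →
        (F^[t] lam i ⟨d i - 1 - qi * l, hPi l⟩
            = ((ps (c i j) (c j i))^[t]
                (lam i ⟨d i - 1 - qi * l, hPi l⟩, lam j ⟨d j - 1 - qj * l, hPj l⟩)).1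
          ∧ F^[t] lam j ⟨d j - 1 - qj * l, hPj l⟩
            = ((ps (c i j) (c j i))^[t]
                (lam i ⟨d i - 1 - qi * l, hPi l⟩, lam j ⟨d j - 1 - qj * l, hPj l⟩)).2))
      ∧ (∀ p : Fin (d i), ¬ qi ∣ (d i - 1 - (p : ℕ)) → F^[t] lam i p = (-1) ^ t * lam i p)
      ∧ (∀ q : Fin (d j), ¬ qj ∣ (d j - 1 - (q : ℕ)) → F^[t] lam j q = (-1) ^ t * lam j q) := by
    intro t
    induction t with
    | zero => exact ⟨fun l hl => ⟨rfl, rfl⟩, fun p hp => by simp, fun q hq => by simp⟩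
    | succ t ih =>
      obtain ⟨ihA, ihB, ihC⟩ := ih
      refine ⟨fun l hl => ?_, fun p hp => ?_, fun q hq => ?_⟩
      · obtain ⟨ihx, ihy⟩ := ihA l hl
        constructor
        · rw [Function.iterate_succ_apply', Function.iterate_succ_apply']
          rw [hstep_i, hnu_i _ l hl, ihx, ihy]
          simp only [ps]; ring
        · rw [Function.iterate_succ_apply', Function.iterate_succ_apply']
          rw [hstep_j]
          rw [Finset.sum_eq_single l]
          · rw [if_pos rfl, hnu_i _ l hl, ihx, ihy]
            simp only [ps]; ring
          · intro b hb hbl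
            rw [if_neg]
            intro hcond
            have hcond' : d j - 1 - qj * l = d j - 1 - qj * b := hcond
            have hb' := Finset.mem_range.1 hb
            have h1 := hbj l hl; have h2 := hbj b hb'
            have h3 : qj * l = qj * b := by omega
            exact hbl (Nat.eq_of_mul_eq_mul_left hqj h3).symm
          · intro hl'; exact absurd (Finset.mem_range.2 hl) hl'
      · rw [Function.iterate_succ_apply', hstep_i, hnu_i' _ p hp, ihB p hp]; ring
      · rw [Function.iterate_succ_apply', hstep_j]
        rw [Finset.sum_eq_zero, sub_zero, ihC q hq]
        · ring
        · intro b hb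
          rw [if_neg]
          intro hcond
          have hb' := Finset.mem_range.1 hb
          have h2 := hbj b hb'
          exact hq ⟨b, by omega⟩
  have hIi : ∀ p : Fin (d i), F^[m] lam i p = lam i p := by
    intro p
    by_cases hact : qi ∣ (d i - 1 - (p : ℕ))
    · obtain ⟨l, hl⟩ := hact
      have hlG : l < G := by
        by_contra hlG
        push_neg at hlG
        have h1 : qi * G ≤ qi * l := Nat.mul_le_mul_left _ hlG
        have h2 := p.isLt
        omega
      have hp : p = ⟨d i - 1 - qi * l, hPi l⟩ := Fin.ext (by
        have h0 : ((⟨d i - 1 - qi * l, hPi l⟩ : Fin (d i)) : ℕ) = d i - 1 - qi * l := rfl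
        have := p.isLt; omega)
      rw [hp, ((main m).1 l hlG).1, hps1]
    · rcases hall with ⟨h1, h2⟩ | hev
      · exact absurd (by rw [h1]; exact one_dvd _) hact
      · rw [(main m).2.1 p hact, hev.neg_one_pow, one_mul]
  have hIj : ∀ q : Fin (d j), F^[m] lam j q = lam j q := by
    intro q
    by_cases hact : qj ∣ (d j - 1 - (q : ℕ))
    · obtain ⟨l, hl⟩ := hact
      have hlG : l < G := by
        by_contra hlG
        push_neg at hlG
        have h1 : qj * G ≤ qj * l := Nat.mul_le_mul_left _ hlG
        have h2 := q.isLt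
        omega
      have hq : q = ⟨d j - 1 - qj * l, hPj l⟩ := Fin.ext (by
        have h0 : ((⟨d j - 1 - qj * l, hPj l⟩ : Fin (d j)) : ℕ) = d j - 1 - qj * l := rfl
        have := q.isLt; omega)
      rw [hq, ((main m).1 l hlG).2, hps1]
    · rcases hall with ⟨h1, h2⟩ | hev
      · exact absurd (by rw [h2]; exact one_dvd _) hact
      · rw [(main m).2.2 q hact, hev.neg_one_pow, one_mul]
  have hSi : ∀ p : Fin (d i), ∑ s ∈ range m, F^[s] lam i p = 0 := by
    intro p
    by_cases hact : qi ∣ (d i - 1 - (p : ℕ))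
    · obtain ⟨l, hl⟩ := hact
      have hlG : l < G := by
        by_contra hlG
        push_neg at hlG
        have h1 : qi * G ≤ qi * l := Nat.mul_le_mul_left _ hlG
        have h2 := p.isLt
        omega
      have hp : p = ⟨d i - 1 - qi * l, hPi l⟩ := Fin.ext (by
        have h0 : ((⟨d i - 1 - qi * l, hPi l⟩ : Fin (d i)) : ℕ) = d i - 1 - qi * l := rfl
        have := p.isLt; omega)
      rw [hp, Finset.sum_congr rfl (fun s _ => ((main s).1 l hlG).1)]
      exact hps2 _
    · rw [Finset.sum_congr rfl (fun s _ => (main s).2.1 p hact), ← Finset.sum_mul,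
        neg_one_geom_sum]
      rcases hall with ⟨h1, h2⟩ | hev
      · exact absurd (by rw [h1]; exact one_dvd _) hact
      · rw [if_pos hev, zero_mul]
  have hSj : ∀ q : Fin (d j), ∑ s ∈ range m, F^[s] lam j q = 0 := by
    intro q
    by_cases hact : qj ∣ (d j - 1 - (q : ℕ))
    · obtain ⟨l, hl⟩ := hact
      have hlG : l < G := by
        by_contra hlG
        push_neg at hlG
        have h1 : qj * G ≤ qj * l := Nat.mul_le_mul_left _ hlG
        have h2 := q.isLt
        omega
      have hq : q = ⟨d j - 1 - qj * l, hPj l⟩ := Fin.ext (by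
        have h0 : ((⟨d j - 1 - qj * l, hPj l⟩ : Fin (d j)) : ℕ) = d j - 1 - qj * l := rfl
        have := q.isLt; omega)
      rw [hq, Finset.sum_congr rfl (fun s _ => ((main s).1 l hlG).2)]
      exact hps3 _
    · rw [Finset.sum_congr rfl (fun s _ => (main s).2.2 q hact), ← Finset.sum_mul,
        neg_one_geom_sum]
      rcases hall with ⟨h1, h2⟩ | hev
      · exact absurd (by rw [h2]; exact one_dvd _) hact
      · rw [if_pos hev, zero_mul]
  have hSi' : ∀ p : Fin (d i), ∑ s ∈ range m, F^[s + 1] lam i p = 0 := by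
    intro p
    have h1 := Finset.sum_range_succ' (fun s => F^[s] lam i p) m
    have h2 := Finset.sum_range_succ (fun s => F^[s] lam i p) m
    simp only [Function.iterate_zero, id_eq] at h1
    rw [h2, hSi p, hIi p, zero_add] at h1
    linear_combination -h1
  show F^[m] lam = id lam
  funext k
  funext p
  show F^[m] lam k p = lam k p
  by_cases hki : k = i
  · subst hki; exact hIi p
  by_cases hkj : k = j
  · subst hkj; exact hIj p
  have hD : ∀ t : ℕ, F^[t] lam k p = lam k p
      - (∑ s ∈ range t, ∑ l ∈ range (Nat.gcd (d j) (d k)),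
          if (p : ℕ) = d k - 1 - d k / Nat.gcd (d j) (d k) * l then
            (c j k : ℂ) * F^[s] lam j ⟨d j - 1 - d j / Nat.gcd (d j) (d k) * l,
              by have := hd j; omega⟩ else 0)
      + (∑ s ∈ range t, ∑ l ∈ range (Nat.gcd (d i) (d k)),
          if (p : ℕ) = d k - 1 - d k / Nat.gcd (d i) (d k) * l then
            (c i k : ℂ) * F^[s + 1] lam i ⟨d i - 1 - d i / Nat.gcd (d i) (d k) * l,
              by have := hd i; omega⟩ else 0) := by
    intro t
    induction t with
    | zero => simp
    | succ t ih =>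
      rw [Function.iterate_succ_apply', hstep_k k hki hkj, ih,
        Finset.sum_range_succ, Finset.sum_range_succ,
        ← Function.iterate_succ_apply' F t lam]
      ring
  rw [hD m]
  have hA0 : (∑ s ∈ range m, ∑ l ∈ range (Nat.gcd (d j) (d k)),
      if (p : ℕ) = d k - 1 - d k / Nat.gcd (d j) (d k) * l then
        (c j k : ℂ) * F^[s] lam j ⟨d j - 1 - d j / Nat.gcd (d j) (d k) * l,
          by have := hd j; omega⟩ else 0) = 0 := by
    rw [Finset.sum_comm]
    apply Finset.sum_eq_zero
    intro l hl
    by_cases hcond : (p : ℕ) = d k - 1 - d k / Nat.gcd (d j) (d k) * l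
    · simp only [if_pos hcond]
      rw [← Finset.mul_sum, hSj _, mul_zero]
    · simp only [if_neg hcond, Finset.sum_const_zero]
  have hB0 : (∑ s ∈ range m, ∑ l ∈ range (Nat.gcd (d i) (d k)),
      if (p : ℕ) = d k - 1 - d k / Nat.gcd (d i) (d k) * l then
        (c i k : ℂ) * F^[s + 1] lam i ⟨d i - 1 - d i / Nat.gcd (d i) (d k) * l,
          by have := hd i; omega⟩ else 0) = 0 := by
    rw [Finset.sum_comm]
    apply Finset.sum_eq_zero
    intro l hl
    by_cases hcond : (p : ℕ) = d k - 1 - d k / Nat.gcd (d i) (d k) * l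
    · simp only [if_pos hcond]
      rw [← Finset.mul_sum, hSi' _, mul_zero]
    · simp only [if_neg hcond, Finset.sum_const_zero]
  rw [hA0, hB0]
  ring

/-- the reflections `r_i` satisfy the Coxeter relations of the
Weyl group `W(𝐂)`: `r_i² = Id` and `(r_i r_j)^{m_{ij}} = Id` for `i ≠ j`,
where `m_{ij} = 2, 3, 4, 6` according as `c_{ij}c_{ji} = 0, 1, 2, 3`.  Here
`𝐂` is the symmetrizable GCM of a quiver with multiplicities:
`c_{ij} = 2δ_{ij} − a_{ij} d_j / d_{ij}`. -/
theorem stmt14 {I : Type} [Fintype I] [DecidableEq I]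
    (a : I → I → ℕ) (d : I → ℕ) (hd : ∀ i, 0 < d i)
    (hsymm : ∀ i j, a i j = a j i) (hdiag : ∀ i, a i i = 0)
    (c : I → I → ℤ)
    (hc : ∀ i j, c i j =
      (if i = j then 2 else 0)
        - (((a i j * (d j / Nat.gcd (d i) (d j))) : ℕ) : ℤ)) :
    (∀ i, wrefl d hd c i ∘ wrefl d hd c i = id)
    ∧ (∀ i j, i ≠ j → ∀ m : ℕ,
        ((c i j * c j i = 0 ∧ m = 2) ∨ (c i j * c j i = 1 ∧ m = 3)
          ∨ (c i j * c j i = 2 ∧ m = 4) ∨ (c i j * c j i = 3 ∧ m = 6)) →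
        (wrefl d hd c i ∘ wrefl d hd c j)^[m] = id) := by
  constructor
  · intro i
    funext lam
    funext k p
    by_cases hk : k = i
    · subst hk
      simp [Function.comp_apply, wrefl_same]
    · show wrefl d hd c i (wrefl d hd c i lam) k p = lam k p
      rw [wrefl_other d hd c hk, wrefl_other d hd c hk]
      simp only [wrefl_same, mul_neg]
      rw [sum_ite_neg]
      ring
  · intro i j hij m hm
    have hdi0 := hd i; have hdj0 := hd j
    have hG0 : 0 < Nat.gcd (d i) (d j) := Nat.gcd_pos_of_pos_left _ hdi0
    have hgc : Nat.gcd (d j) (d i) = Nat.gcd (d i) (d j) := Nat.gcd_comm _ _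
    have hqi : 0 < d i / Nat.gcd (d i) (d j) :=
      Nat.div_pos (Nat.le_of_dvd hdi0 (Nat.gcd_dvd_left _ _)) hG0
    have hqj : 0 < d j / Nat.gcd (d i) (d j) :=
      Nat.div_pos (Nat.le_of_dvd hdj0 (Nat.gcd_dvd_right _ _)) hG0
    have hcij : c i j = -((a i j * (d j / Nat.gcd (d i) (d j)) : ℕ) : ℤ) := by
      rw [hc i j, if_neg hij]; ring
    have hcji : c j i = -((a j i * (d i / Nat.gcd (d i) (d j)) : ℕ) : ℤ) := by
      rw [hc j i, if_neg (Ne.symm hij), hgc]; ring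
    rcases hm with ⟨h0, rfl⟩ | ⟨h1, rfl⟩ | ⟨h2, rfl⟩ | ⟨h3, rfl⟩
    · -- c i j * c j i = 0, m = 2
      rw [hcij, hcji, neg_mul_neg] at h0
      have h0n : (a i j * (d j / Nat.gcd (d i) (d j))) *
          (a j i * (d i / Nat.gcd (d i) (d j))) = 0 := by exact_mod_cast h0
      have ha : a i j = 0 := by
        rcases Nat.mul_eq_zero.1 h0n with h | h
        · rcases Nat.mul_eq_zero.1 h with h' | h'
          · exact h'
          · omega
        · rcases Nat.mul_eq_zero.1 h with h' | h'
          · rw [hsymm i j, h']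
          · omega
      have hC1 : ((c i j : ℤ) : ℂ) = 0 := by rw [hcij, ha]; simp
      have hC2 : ((c j i : ℤ) : ℂ) = 0 := by rw [hcji, hsymm j i, ha]; simp
      exact key d hd c i j hij 2 (ps0_iter _ _ hC1 hC2) (ps0_sum1 _ _ hC1 hC2)
        (ps0_sum2 _ _ hC1 hC2) (Or.inr ⟨1, rfl⟩)
    · -- c i j * c j i = 1, m = 3
      have h1' : ((c i j : ℤ) : ℂ) * ((c j i : ℤ) : ℂ) = 1 := by exact_mod_cast h1
      rw [hcij, hcji, neg_mul_neg] at h1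
      have h1n : (a i j * (d j / Nat.gcd (d i) (d j))) *
          (a j i * (d i / Nat.gcd (d i) (d j))) = 1 := by exact_mod_cast h1
      have hfac1 := Nat.eq_one_of_mul_eq_one_right h1n
      have hfac2 := Nat.eq_one_of_mul_eq_one_left h1n
      have hq1 : d j / Nat.gcd (d i) (d j) = 1 := Nat.eq_one_of_mul_eq_one_left hfac1
      have hq2 : d i / Nat.gcd (d i) (d j) = 1 := Nat.eq_one_of_mul_eq_one_left hfac2
      exact key d hd c i j hij 3 (ps1_iter _ _ h1') (ps1_sum1 _ _ h1')
        (ps1_sum2 _ _ h1') (Or.inl ⟨hq2, hq1⟩)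
    · -- c i j * c j i = 2, m = 4
      have h2' : ((c i j : ℤ) : ℂ) * ((c j i : ℤ) : ℂ) = 2 := by exact_mod_cast h2
      exact key d hd c i j hij 4 (ps2_iter _ _ h2') (ps2_sum1 _ _ h2')
        (ps2_sum2 _ _ h2') (Or.inr ⟨2, rfl⟩)
    · -- c i j * c j i = 3, m = 6
      have h3' : ((c i j : ℤ) : ℂ) * ((c j i : ℤ) : ℂ) = 3 := by exact_mod_cast h3
      exact key d hd c i j hij 6 (ps3_iter _ _ h3') (ps3_sum1 _ _ h3')
        (ps3_sum2 _ _ h3') (Or.inr ⟨3, rfl⟩)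
end

section
/- Define ρ : R_𝐝 → ℂ^I by ρ((λ_i)_i) = (λ_{i, d_i−1})_i, the tuple of coefficients of ε_i^{d_i−1} (equivalently the residues res(λ_i dε_i/ε_i^{d_i})). Then for every i ∈ I and λ ∈ R_𝐝, one has ρ(r_i(λ)) = ᵗs_i(ρ(λ)), where s_i is the i-th simple reflection on ℤ^I given by s_i(v) = v − Σ_j c_{ij} v_j e_i and ᵗs_i is its transpose acting on ℂ^I. -/
open Finset

/-- the residue map `ρ(λ)_j = λ_{j,d_j−1}` intertwines `r_i`
with the transposed simple reflection: `ρ(r_i(λ))_j = ρ(λ)_j − c_{ij} ρ(λ)_i`,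
i.e. `ρ ∘ r_i = ᵗs_i ∘ ρ`. -/
theorem stmt15 {I : Type} [Fintype I] [DecidableEq I]
    (a : I → I → ℕ) (d : I → ℕ) (hd : ∀ i, 0 < d i)
    (hsymm : ∀ i j, a i j = a j i) (hdiag : ∀ i, a i i = 0)
    (c : I → I → ℤ)
    (hc : ∀ i j, c i j =
      (if i = j then 2 else 0)
        - (((a i j * (d j / Nat.gcd (d i) (d j))) : ℕ) : ℤ)) :
    ∀ (i : I) (lam : ∀ j, Fin (d j) → ℂ) (j : I),
      wrefl d hd c i lam j ⟨d j - 1, by have := hd j; omega⟩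
        = lam j ⟨d j - 1, by have := hd j; omega⟩
          - (c i j : ℂ) * lam i ⟨d i - 1, by have := hd i; omega⟩ := by
  intro i lam j
  unfold wrefl
  by_cases h : j = i
  · subst h
    have hcjj : c j j = 2 := by
      rw [hc j j, hdiag]; simp
    rw [if_pos rfl, hcjj]
    push_cast
    ring
  · rw [if_neg h]
    have hg : 0 < Nat.gcd (d i) (d j) := Nat.gcd_pos_of_pos_left _ (hd i)
    have hdvd : Nat.gcd (d i) (d j) ∣ d j := Nat.gcd_dvd_right _ _
    have hq : 1 ≤ d j / Nat.gcd (d i) (d j) :=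
      Nat.one_le_div_iff hg |>.mpr (Nat.le_of_dvd (hd j) hdvd)
    have hsum : (∑ l ∈ Finset.range (Nat.gcd (d i) (d j)),
        if ((⟨d j - 1, by have := hd j; omega⟩ : Fin (d j)) : ℕ)
            = d j - 1 - (d j / Nat.gcd (d i) (d j)) * l then
          (c i j : ℂ) *
            lam i ⟨d i - 1 - (d i / Nat.gcd (d i) (d j)) * l, by
              have := hd i; omega⟩
        else 0)
        = (c i j : ℂ) * lam i ⟨d i - 1, by have := hd i; omega⟩ := by
      rw [Finset.sum_eq_single_of_mem 0 (Finset.mem_range.mpr hg)]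
      · simp
      · intro l hl hl0
        rw [if_neg]
        simp only [Fin.val_mk]
        have h1 : 1 ≤ (d j / Nat.gcd (d i) (d j)) * l := Nat.one_le_iff_ne_zero.mpr (by positivity)
        have hlg : l + 1 ≤ Nat.gcd (d i) (d j) := Finset.mem_range.mp hl
        have key : (d j / Nat.gcd (d i) (d j)) * l + d j / Nat.gcd (d i) (d j) ≤ d j := by
          calc (d j / Nat.gcd (d i) (d j)) * l + d j / Nat.gcd (d i) (d j)
              = (d j / Nat.gcd (d i) (d j)) * (l + 1) := by ring
            _ ≤ (d j / Nat.gcd (d i) (d j)) * Nat.gcd (d i) (d j) :=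
                Nat.mul_le_mul_left _ hlg
            _ = d j := Nat.div_mul_cancel hdvd
        omega
    rw [hsum]
end

section
/- Let (𝖰,𝐝) be a quiver with multiplicities having an irregular leg 0,1,…,l as in the regularization setup (d_0 = 1, d_i = d > 1 for i ∈ [1,l]), with GCM 𝐂 and symmetrizer D, and let (𝖰̌,𝐝̌) be its regularization with GCM 𝐂̌ and symmetrizer Ď. Define φ : ℤ^I → ℤ^I by φ(v)_i = v_i − v_{i+1} for i ∈ [0,l-1] and φ(v)_i = v_i otherwise. Then ᵗφ Ď 𝐂̌ φ = D 𝐂, i.e. φ is an isometry from (ℤ^I, ᵗv D𝐂 w) to (ℤ^I, ᵗv Ď𝐂̌ w). -/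
open Finset
open Fin.NatCast

private lemma finsum_q (n : ℕ) [NeZero n] (g : Fin n → ℚ) :
    ∑ i : Fin n, g i = ∑ i ∈ Finset.range n, g (i : Fin n) := by
  rw [← Fin.sum_univ_eq_sum_range (fun i : ℕ => g (i : Fin n)) n]
  exact Finset.sum_congr rfl (fun i _ => by rw [Fin.cast_val_eq_self])

private lemma tele (l : ℕ) (U V : ℕ → ℚ)
    (hU : ∀ i < l, U i = V i - V (i+1)) (hUl : U l = V l) :
    ∑ i ∈ Finset.range (l+1), U i = V 0 := by
  rw [Finset.sum_range_succ, hUl,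
    Finset.sum_congr rfl (fun i hi => hU i (Finset.mem_range.mp hi)),
    Finset.sum_range_sub' V l]
  ring

private lemma teleprod (l : ℕ) (U V U' W : ℕ → ℚ)
    (hU : ∀ i < l, U i = V i - V (i+1)) (hUl : U l = V l)
    (hU' : ∀ i < l, U' i = W i - W (i+1)) (hU'l : U' l = W l) :
    ∑ i ∈ Finset.range (l+1), U i * U' i
      = 2 * (∑ i ∈ Finset.range (l+1), V i * W i) - V 0 * W 0
        - ∑ i ∈ Finset.range l, (V i * W (i+1) + V (i+1) * W i) := by
  have h1 : ∑ i ∈ Finset.range (l+1), V i * W i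
      = ∑ i ∈ Finset.range l, V i * W i + V l * W l := Finset.sum_range_succ _ l
  have h2 : ∑ i ∈ Finset.range (l+1), V i * W i
      = ∑ i ∈ Finset.range l, V (i+1) * W (i+1) + V 0 * W 0 :=
    Finset.sum_range_succ' _ l
  rw [Finset.sum_range_succ, hUl, hU'l,
    Finset.sum_congr rfl (fun i hi => by
      rw [hU i (Finset.mem_range.mp hi), hU' i (Finset.mem_range.mp hi)])]
  have expand : ∀ i ∈ Finset.range l,
      (V i - V (i+1)) * (W i - W (i+1))
        = V i * W i + V (i+1) * W (i+1) - (V i * W (i+1) + V (i+1) * W i) :=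
    fun i _ => by ring
  rw [Finset.sum_congr rfl expand, Finset.sum_sub_distrib, Finset.sum_add_distrib]
  linarith

private lemma legblock (l : ℕ) (dd : ℕ) (hdd : 1 < dd)
    (D : ℕ → ℕ) (A : ℕ → ℕ → ℕ) (V W : ℕ → ℚ)
    (hD0 : D 0 = 1) (hD : ∀ i, i ≠ 0 → D i = dd)
    (hA : ∀ i j, A i j = if i+1 = j ∨ j+1 = i then 1 else 0) :
    ∑ i ∈ range (l+1), ∑ j ∈ range (l+1),
      V i * (D i : ℚ) * ((if i = j then 2 else 0)
        - (A i j : ℚ) / (Nat.gcd (D i) (D j) : ℚ) * (D j : ℚ)) * W j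
    = 2*dd*(∑ i ∈ range (l+1), V i * W i) - (2*dd-2) * (V 0 * W 0)
      - dd * ∑ i ∈ range l, (V i * W (i+1) + V (i+1) * W i) := by
  have hdd0 : (dd : ℚ) ≠ 0 := by positivity
  have entry : ∀ i ∈ range (l+1), ∀ j ∈ range (l+1),
      V i * (D i : ℚ) * ((if i = j then 2 else 0)
        - (A i j : ℚ) / (Nat.gcd (D i) (D j) : ℚ) * (D j : ℚ)) * W j
      = ((if i = j then (if i = 0 then (2:ℚ) else 2*dd) * (V i * W j) else 0)
          - ((if i+1 = j then (dd:ℚ) * (V i * W j) else 0)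
            + (if j+1 = i then (dd:ℚ) * (V i * W j) else 0))) := by
    intro i _ j _
    by_cases hij : i = j
    · subst hij
      rw [hA]
      rw [if_neg (show ¬(i+1 = i ∨ i+1 = i) by omega)]
      simp only [if_pos (rfl : i = i), if_neg (show ¬(i+1 = i) by omega)]
      by_cases h0 : i = 0
      · rw [if_pos h0, h0, hD0]
        push_cast
        ring
      · rw [if_neg h0, hD i h0]
        push_cast
        ring
    · rw [hA]
      simp only [if_neg hij]
      by_cases h1 : i + 1 = j
      · have hj0 : j ≠ 0 := by omega
        rw [if_pos (show i+1 = j ∨ j+1 = i from Or.inl h1), if_pos h1,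
          if_neg (show ¬(j+1 = i) by omega), hD j hj0]
        by_cases h0 : i = 0
        · rw [h0, hD0, Nat.gcd_one_left]
          push_cast
          ring
        · rw [hD i h0, Nat.gcd_self, Nat.cast_one, div_mul_cancel₀ (1:ℚ) hdd0]
          ring
      · by_cases h2 : j + 1 = i
        · have hi0 : i ≠ 0 := by omega
          rw [if_pos (show i+1 = j ∨ j+1 = i from Or.inr h2), if_neg h1, if_pos h2,
            hD i hi0]
          by_cases h0 : j = 0
          · rw [h0, hD0, Nat.gcd_one_right]
            push_cast
            ring
          · rw [hD j h0, Nat.gcd_self, Nat.cast_one, div_mul_cancel₀ (1:ℚ) hdd0]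
            ring
        · rw [if_neg (show ¬(i+1 = j ∨ j+1 = i) by tauto), if_neg h1, if_neg h2]
          push_cast
          ring
  rw [Finset.sum_congr rfl (fun i hi => Finset.sum_congr rfl (fun j hj => entry i hi j hj))]
  have split : ∀ i ∈ range (l+1),
      (∑ j ∈ range (l+1),
        ((if i = j then (if i = 0 then (2:ℚ) else 2*dd) * (V i * W j) else 0)
          - ((if i+1 = j then (dd:ℚ) * (V i * W j) else 0)
            + (if j+1 = i then (dd:ℚ) * (V i * W j) else 0))))
      = (∑ j ∈ range (l+1), (if i = j then (if i = 0 then (2:ℚ) else 2*dd) * (V i * W j) else 0))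
        - ((∑ j ∈ range (l+1), (if i+1 = j then (dd:ℚ) * (V i * W j) else 0))
          + (∑ j ∈ range (l+1), (if j+1 = i then (dd:ℚ) * (V i * W j) else 0))) := by
    intro i _
    rw [Finset.sum_sub_distrib, Finset.sum_add_distrib]
  rw [Finset.sum_congr rfl split, Finset.sum_sub_distrib, Finset.sum_add_distrib]
  have hdiag : ∑ i ∈ range (l+1),
      (∑ j ∈ range (l+1), (if i = j then (if i = 0 then (2:ℚ) else 2*dd) * (V i * W j) else 0))
      = 2*dd*(∑ i ∈ range (l+1), V i * W i) - (2*dd-2) * (V 0 * W 0) := by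
    have : ∀ i ∈ range (l+1),
        (∑ j ∈ range (l+1), (if i = j then (if i = 0 then (2:ℚ) else 2*dd) * (V i * W j) else 0))
        = 2*dd*(V i * W i) - (if i = 0 then (2*dd-2) * (V 0 * W 0) else 0) := by
      intro i hi
      rw [Finset.sum_ite_eq (range (l+1)) i (fun j => (if i = 0 then (2:ℚ) else 2*dd) * (V i * W j)),
        if_pos hi]
      by_cases h0 : i = 0
      · rw [if_pos h0, if_pos h0, h0]; ring
      · rw [if_neg h0, if_neg h0]; ring
    rw [Finset.sum_congr rfl this, Finset.sum_sub_distrib, Finset.mul_sum]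
    congr 1
    rw [Finset.sum_ite_eq' (range (l+1)) 0 (fun _ => (2*(dd:ℚ)-2) * (V 0 * W 0)),
      if_pos (Finset.mem_range.mpr (by omega))]
  have hup : ∑ i ∈ range (l+1),
      (∑ j ∈ range (l+1), (if i+1 = j then (dd:ℚ) * (V i * W j) else 0))
      = dd * ∑ i ∈ range l, V i * W (i+1) := by
    have : ∀ i ∈ range (l+1),
        (∑ j ∈ range (l+1), (if i+1 = j then (dd:ℚ) * (V i * W j) else 0))
        = if i+1 ∈ range (l+1) then (dd:ℚ) * (V i * W (i+1)) else 0 :=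
      fun i _ => Finset.sum_ite_eq (range (l+1)) (i+1) (fun j => (dd:ℚ) * (V i * W j))
    rw [Finset.sum_congr rfl this, Finset.sum_range_succ,
      if_neg (by simp), add_zero, Finset.mul_sum]
    exact Finset.sum_congr rfl (fun i hi => by
      rw [if_pos (Finset.mem_range.mpr (by have := Finset.mem_range.mp hi; omega))])
  have hdown : ∑ i ∈ range (l+1),
      (∑ j ∈ range (l+1), (if j+1 = i then (dd:ℚ) * (V i * W j) else 0))
      = dd * ∑ i ∈ range l, V (i+1) * W i := by
    rw [Finset.sum_comm]
    have : ∀ j ∈ range (l+1),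
        (∑ i ∈ range (l+1), (if j+1 = i then (dd:ℚ) * (V i * W j) else 0))
        = if j+1 ∈ range (l+1) then (dd:ℚ) * (V (j+1) * W j) else 0 :=
      fun j _ => Finset.sum_ite_eq (range (l+1)) (j+1) (fun i => (dd:ℚ) * (V i * W j))
    rw [Finset.sum_congr rfl this, Finset.sum_range_succ,
      if_neg (by simp), add_zero, Finset.mul_sum]
    exact Finset.sum_congr rfl (fun i hi => by
      rw [if_pos (Finset.mem_range.mpr (by have := Finset.mem_range.mp hi; omega))])
  rw [hdiag, hup, hdown, Finset.sum_add_distrib, mul_add]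

private lemma legblock_check (n : ℕ) (c e : ℚ) (U U' : ℕ → ℚ) :
    ∑ i ∈ range n, ∑ j ∈ range n,
      U i * ((if i = j then c else 0) - e) * U' j
    = c * (∑ i ∈ range n, U i * U' i)
      - e * ((∑ i ∈ range n, U i) * (∑ j ∈ range n, U' j)) := by
  have point : ∀ i ∈ range n, ∀ j ∈ range n,
      U i * ((if i = j then c else 0) - e) * U' j
      = (if i = j then c * (U i * U' j) else 0) - e * (U i * U' j) := by
    intro i _ j _
    by_cases hij : i = j
    · rw [if_pos hij, if_pos hij]; ring
    · rw [if_neg hij, if_neg hij]; ring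
  rw [Finset.sum_congr rfl (fun i hi => Finset.sum_congr rfl (fun j hj => point i hi j hj))]
  have split : ∀ i ∈ range n,
      ∑ j ∈ range n, ((if i = j then c * (U i * U' j) else 0) - e * (U i * U' j))
      = (∑ j ∈ range n, (if i = j then c * (U i * U' j) else 0))
        - ∑ j ∈ range n, e * (U i * U' j) := fun i _ => Finset.sum_sub_distrib _ _
  rw [Finset.sum_congr rfl split, Finset.sum_sub_distrib]
  congr 1
  · rw [Finset.mul_sum]
    refine Finset.sum_congr rfl (fun i hi => ?_)
    rw [Finset.sum_ite_eq (range n) i (fun j => c * (U i * U' j)), if_pos hi]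
  · rw [Finset.sum_mul_sum, Finset.mul_sum]
    exact Finset.sum_congr rfl (fun i _ => by rw [Finset.mul_sum])

/-- regularization gives an isometry of root lattices.  The
vertex set is `I = Fin (l+1) ⊕ K`, with `inl 0, inl 1, …, inl l` the irregular
leg: `d(inl 0) = 1`, `d(inl i) = dd > 1` for `i ∈ [1,l]`; within `[0,l]`
consecutive vertices are joined by exactly one edge and there are no other
edges touching `[1,l]`.  `(ǎ, ď)` is the regularization: leg multiplicities
become `1`, leg edges are replaced by `dd − 2` edges between each pair of
distinct leg vertices, and every edge joining `k ∈ K` with the base `inl 0`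
is duplicated at each leg vertex.  With
`φ(v)_{inl i} = v_{inl i} − v_{inl (i+1)}` for `i < l` and `φ(v)_x = v_x`
otherwise, one has `ᵗφ Ď 𝐂̌ φ = D 𝐂`, i.e. `φ` is an isometry for the forms
`ᵗv D 𝐂 w` and `ᵗv Ď 𝐂̌ w`, where `𝐂 = 2·Id − 𝐀′D`,
`𝐀′ = (a_{xy}/gcd(d_x,d_y))`, and similarly for `𝐂̌`. -/
theorem stmt18 {K : Type} [Fintype K] [DecidableEq K] (l : ℕ) (hl : 0 < l)
    (dd : ℕ) (hdd : 1 < dd)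
    (d dc : (Fin (l + 1) ⊕ K) → ℕ)
    (a ac : (Fin (l + 1) ⊕ K) → (Fin (l + 1) ⊕ K) → ℕ)
    (hd0 : d (Sum.inl 0) = 1)
    (hdleg : ∀ i : Fin (l + 1), i ≠ 0 → d (Sum.inl i) = dd)
    (hdK : ∀ k, 0 < d (Sum.inr k))
    (ha_symm : ∀ x y, a x y = a y x)
    (ha_diag : ∀ x, a x x = 0)
    (ha_leg : ∀ i j : Fin (l + 1),
      a (Sum.inl i) (Sum.inl j)
        = if (i : ℕ) + 1 = (j : ℕ) ∨ (j : ℕ) + 1 = (i : ℕ) then 1 else 0)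
    (ha_K : ∀ (i : Fin (l + 1)) (k : K), i ≠ 0 → a (Sum.inl i) (Sum.inr k) = 0)
    (hdc_leg : ∀ i : Fin (l + 1), dc (Sum.inl i) = 1)
    (hdc_K : ∀ k, dc (Sum.inr k) = d (Sum.inr k))
    (hac_symm : ∀ x y, ac x y = ac y x)
    (hac_leg : ∀ i j : Fin (l + 1),
      ac (Sum.inl i) (Sum.inl j) = if i = j then 0 else dd - 2)
    (hac_K : ∀ (i : Fin (l + 1)) (k : K),
      ac (Sum.inl i) (Sum.inr k) = a (Sum.inl 0) (Sum.inr k))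
    (hac_KK : ∀ k k', ac (Sum.inr k) (Sum.inr k') = a (Sum.inr k) (Sum.inr k'))
    (φ : ((Fin (l + 1) ⊕ K) → ℚ) → ((Fin (l + 1) ⊕ K) → ℚ))
    (hφ_leg : ∀ (v : (Fin (l + 1) ⊕ K) → ℚ) (i : ℕ) (hi : i < l),
      φ v (Sum.inl ⟨i, by omega⟩)
        = v (Sum.inl ⟨i, by omega⟩) - v (Sum.inl ⟨i + 1, by omega⟩))
    (hφ_last : ∀ v : (Fin (l + 1) ⊕ K) → ℚ,
      φ v (Sum.inl ⟨l, by omega⟩) = v (Sum.inl ⟨l, by omega⟩))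
    (hφ_K : ∀ (v : (Fin (l + 1) ⊕ K) → ℚ) (k : K),
      φ v (Sum.inr k) = v (Sum.inr k)) :
    ∀ v w : (Fin (l + 1) ⊕ K) → ℚ,
      (∑ x, ∑ y, φ v x * dc x *
          ((if x = y then 2 else 0)
            - (ac x y : ℚ) / (Nat.gcd (dc x) (dc y) : ℚ) * dc y) * φ w y)
      = ∑ x, ∑ y, v x * d x *
          ((if x = y then 2 else 0)
            - (a x y : ℚ) / (Nat.gcd (d x) (d y) : ℚ) * d y) * w y := by
  intro v w
  haveI : NeZero (l + 1) := ⟨by omega⟩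
  -- basic Fin facts
  have hmk : ∀ (i : ℕ) (h : i < l + 1), (⟨i, h⟩ : Fin (l + 1)) = (i : Fin (l + 1)) :=
    fun i h => Fin.ext (Fin.val_cast_of_lt h).symm
  have hFeq : ∀ i j : ℕ, i < l + 1 → j < l + 1 →
      (((i : ℕ) : Fin (l + 1)) = ((j : ℕ) : Fin (l + 1)) ↔ i = j) := by
    intro i j hi hj
    constructor
    · intro h
      have := congrArg Fin.val h
      rwa [Fin.val_cast_of_lt hi, Fin.val_cast_of_lt hj] at this
    · intro h; rw [h]
  have hSeq : ∀ i j : ℕ, i < l + 1 → j < l + 1 →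
      ((Sum.inl ((i : ℕ) : Fin (l + 1)) : Fin (l + 1) ⊕ K)
          = Sum.inl ((j : ℕ) : Fin (l + 1)) ↔ i = j) := by
    intro i j hi hj
    rw [Sum.inl.injEq]
    exact hFeq i j hi hj
  have hne0 : ∀ i : ℕ, i < l + 1 → i ≠ 0 → ((i : ℕ) : Fin (l + 1)) ≠ 0 := by
    intro i hi h0 hcon
    apply h0
    have := congrArg Fin.val hcon
    rwa [Fin.val_cast_of_lt hi] at this
  -- d and a in ℕ-indexed form
  have hdnat : ∀ i : ℕ, i < l + 1 →
      d (Sum.inl ((i : ℕ) : Fin (l + 1))) = if i = 0 then 1 else dd := by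
    intro i hi
    by_cases h0 : i = 0
    · rw [if_pos h0, h0, Nat.cast_zero, hd0]
    · rw [if_neg h0]
      exact hdleg _ (hne0 i hi h0)
  have hanat : ∀ i j : ℕ, i < l + 1 → j < l + 1 →
      a (Sum.inl ((i : ℕ) : Fin (l + 1))) (Sum.inl ((j : ℕ) : Fin (l + 1)))
        = if i + 1 = j ∨ j + 1 = i then 1 else 0 := by
    intro i j hi hj
    rw [ha_leg, Fin.val_cast_of_lt hi, Fin.val_cast_of_lt hj]
  -- φ in ℕ-indexed form
  have hUv : ∀ i, i < l → φ v (Sum.inl ((i : ℕ) : Fin (l + 1)))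
      = v (Sum.inl ((i : ℕ) : Fin (l + 1))) - v (Sum.inl ((i + 1 : ℕ) : Fin (l + 1))) := by
    intro i hi
    have := hφ_leg v i hi
    rwa [hmk i (by omega), hmk (i + 1) (by omega)] at this
  have hUvl : φ v (Sum.inl ((l : ℕ) : Fin (l + 1))) = v (Sum.inl ((l : ℕ) : Fin (l + 1))) := by
    have := hφ_last v
    rwa [hmk l (by omega)] at this
  have hUw : ∀ i, i < l → φ w (Sum.inl ((i : ℕ) : Fin (l + 1)))
      = w (Sum.inl ((i : ℕ) : Fin (l + 1))) - w (Sum.inl ((i + 1 : ℕ) : Fin (l + 1))) := by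
    intro i hi
    have := hφ_leg w i hi
    rwa [hmk i (by omega), hmk (i + 1) (by omega)] at this
  have hUwl : φ w (Sum.inl ((l : ℕ) : Fin (l + 1))) = w (Sum.inl ((l : ℕ) : Fin (l + 1))) := by
    have := hφ_last w
    rwa [hmk l (by omega)] at this
  -- telescoping sums
  have htv : ∑ i ∈ range (l + 1), φ v (Sum.inl ((i : ℕ) : Fin (l + 1))) = v (Sum.inl 0) := by
    have := tele l (fun i : ℕ => φ v (Sum.inl ((i : ℕ) : Fin (l + 1))))
      (fun i : ℕ => v (Sum.inl ((i : ℕ) : Fin (l + 1)))) hUv hUvl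
    simpa only [Nat.cast_zero] using this
  have htw : ∑ i ∈ range (l + 1), φ w (Sum.inl ((i : ℕ) : Fin (l + 1))) = w (Sum.inl 0) := by
    have := tele l (fun i : ℕ => φ w (Sum.inl ((i : ℕ) : Fin (l + 1))))
      (fun i : ℕ => w (Sum.inl ((i : ℕ) : Fin (l + 1)))) hUw hUwl
    simpa only [Nat.cast_zero] using this
  have htvFin : ∑ i : Fin (l + 1), φ v (Sum.inl i) = v (Sum.inl 0) := by
    rw [finsum_q]; exact htv
  have htwFin : ∑ i : Fin (l + 1), φ w (Sum.inl i) = w (Sum.inl 0) := by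
    rw [finsum_q]; exact htw
  have hprod : ∑ i ∈ range (l + 1),
        φ v (Sum.inl ((i : ℕ) : Fin (l + 1))) * φ w (Sum.inl ((i : ℕ) : Fin (l + 1)))
      = 2 * (∑ i ∈ range (l + 1),
            v (Sum.inl ((i : ℕ) : Fin (l + 1))) * w (Sum.inl ((i : ℕ) : Fin (l + 1))))
        - v (Sum.inl 0) * w (Sum.inl 0)
        - ∑ i ∈ range l,
            (v (Sum.inl ((i : ℕ) : Fin (l + 1))) * w (Sum.inl ((i + 1 : ℕ) : Fin (l + 1)))
              + v (Sum.inl ((i + 1 : ℕ) : Fin (l + 1))) * w (Sum.inl ((i : ℕ) : Fin (l + 1)))) := by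
    have := teleprod l (fun i : ℕ => φ v (Sum.inl ((i : ℕ) : Fin (l + 1))))
      (fun i : ℕ => v (Sum.inl ((i : ℕ) : Fin (l + 1))))
      (fun i : ℕ => φ w (Sum.inl ((i : ℕ) : Fin (l + 1))))
      (fun i : ℕ => w (Sum.inl ((i : ℕ) : Fin (l + 1)))) hUv hUvl hUw hUwl
    simpa only [Nat.cast_zero] using this
  -- the four blocks of the checked (left) side
  have hLLL : (∑ i : Fin (l + 1), ∑ j : Fin (l + 1),
        φ v (Sum.inl i) * (dc (Sum.inl i) : ℚ)
          * ((if (Sum.inl i : Fin (l + 1) ⊕ K) = Sum.inl j then 2 else 0)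
            - (ac (Sum.inl i) (Sum.inl j) : ℚ)
              / (Nat.gcd (dc (Sum.inl i)) (dc (Sum.inl j)) : ℚ) * (dc (Sum.inl j) : ℚ))
          * φ w (Sum.inl j))
      = 2 * dd * (∑ i ∈ range (l + 1),
            v (Sum.inl ((i : ℕ) : Fin (l + 1))) * w (Sum.inl ((i : ℕ) : Fin (l + 1))))
        - (2 * dd - 2) * (v (Sum.inl 0) * w (Sum.inl 0))
        - dd * ∑ i ∈ range l,
            (v (Sum.inl ((i : ℕ) : Fin (l + 1))) * w (Sum.inl ((i + 1 : ℕ) : Fin (l + 1)))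
              + v (Sum.inl ((i + 1 : ℕ) : Fin (l + 1))) * w (Sum.inl ((i : ℕ) : Fin (l + 1)))) := by
    calc (∑ i : Fin (l + 1), ∑ j : Fin (l + 1),
        φ v (Sum.inl i) * (dc (Sum.inl i) : ℚ)
          * ((if (Sum.inl i : Fin (l + 1) ⊕ K) = Sum.inl j then 2 else 0)
            - (ac (Sum.inl i) (Sum.inl j) : ℚ)
              / (Nat.gcd (dc (Sum.inl i)) (dc (Sum.inl j)) : ℚ) * (dc (Sum.inl j) : ℚ))
          * φ w (Sum.inl j))
        = ∑ i ∈ range (l + 1), ∑ j ∈ range (l + 1),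
            φ v (Sum.inl ((i : ℕ) : Fin (l + 1)))
              * ((if i = j then (dd : ℚ) else 0) - ((dd : ℚ) - 2))
              * φ w (Sum.inl ((j : ℕ) : Fin (l + 1))) := by
          simp only [finsum_q]
          refine Finset.sum_congr rfl fun i hi => Finset.sum_congr rfl fun j hj => ?_
          have hi' := Finset.mem_range.mp hi
          have hj' := Finset.mem_range.mp hj
          rw [hdc_leg, hdc_leg, hac_leg, Nat.gcd_self,
            if_congr (hSeq i j hi' hj') rfl rfl, if_congr (hFeq i j hi' hj') rfl rfl]
          by_cases hij : i = j
          · simp only [if_pos hij]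
            push_cast
            ring
          · simp only [if_neg hij]
            rw [Nat.cast_sub (show 2 ≤ dd by omega)]
            push_cast
            ring
      _ = (dd : ℚ) * (∑ i ∈ range (l + 1),
              φ v (Sum.inl ((i : ℕ) : Fin (l + 1))) * φ w (Sum.inl ((i : ℕ) : Fin (l + 1))))
            - ((dd : ℚ) - 2) * ((∑ i ∈ range (l + 1), φ v (Sum.inl ((i : ℕ) : Fin (l + 1))))
              * (∑ j ∈ range (l + 1), φ w (Sum.inl ((j : ℕ) : Fin (l + 1))))) :=
          legblock_check (l + 1) (dd : ℚ) ((dd : ℚ) - 2)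
            (fun i : ℕ => φ v (Sum.inl ((i : ℕ) : Fin (l + 1))))
            (fun i : ℕ => φ w (Sum.inl ((i : ℕ) : Fin (l + 1))))
      _ = _ := by
          rw [hprod, htv, htw]
          ring
  have hRLL : (∑ i : Fin (l + 1), ∑ j : Fin (l + 1),
        v (Sum.inl i) * (d (Sum.inl i) : ℚ)
          * ((if (Sum.inl i : Fin (l + 1) ⊕ K) = Sum.inl j then 2 else 0)
            - (a (Sum.inl i) (Sum.inl j) : ℚ)
              / (Nat.gcd (d (Sum.inl i)) (d (Sum.inl j)) : ℚ) * (d (Sum.inl j) : ℚ))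
          * w (Sum.inl j))
      = 2 * dd * (∑ i ∈ range (l + 1),
            v (Sum.inl ((i : ℕ) : Fin (l + 1))) * w (Sum.inl ((i : ℕ) : Fin (l + 1))))
        - (2 * dd - 2) * (v (Sum.inl 0) * w (Sum.inl 0))
        - dd * ∑ i ∈ range l,
            (v (Sum.inl ((i : ℕ) : Fin (l + 1))) * w (Sum.inl ((i + 1 : ℕ) : Fin (l + 1)))
              + v (Sum.inl ((i + 1 : ℕ) : Fin (l + 1))) * w (Sum.inl ((i : ℕ) : Fin (l + 1)))) := by
    calc (∑ i : Fin (l + 1), ∑ j : Fin (l + 1),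
        v (Sum.inl i) * (d (Sum.inl i) : ℚ)
          * ((if (Sum.inl i : Fin (l + 1) ⊕ K) = Sum.inl j then 2 else 0)
            - (a (Sum.inl i) (Sum.inl j) : ℚ)
              / (Nat.gcd (d (Sum.inl i)) (d (Sum.inl j)) : ℚ) * (d (Sum.inl j) : ℚ))
          * w (Sum.inl j))
        = ∑ i ∈ range (l + 1), ∑ j ∈ range (l + 1),
            v (Sum.inl ((i : ℕ) : Fin (l + 1))) * ((if i = 0 then 1 else dd : ℕ) : ℚ)
              * ((if i = j then 2 else 0)
                - ((if i + 1 = j ∨ j + 1 = i then 1 else 0 : ℕ) : ℚ)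
                  / (Nat.gcd (if i = 0 then 1 else dd) (if j = 0 then 1 else dd) : ℚ)
                  * ((if j = 0 then 1 else dd : ℕ) : ℚ))
              * w (Sum.inl ((j : ℕ) : Fin (l + 1))) := by
          simp only [finsum_q]
          refine Finset.sum_congr rfl fun i hi => Finset.sum_congr rfl fun j hj => ?_
          have hi' := Finset.mem_range.mp hi
          have hj' := Finset.mem_range.mp hj
          rw [hdnat i hi', hdnat j hj', hanat i j hi' hj',
            if_congr (hSeq i j hi' hj') rfl rfl]
      _ = _ := by
          have := legblock l dd hdd (fun i : ℕ => if i = 0 then 1 else dd)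
            (fun i j : ℕ => if i + 1 = j ∨ j + 1 = i then 1 else 0)
            (fun i : ℕ => v (Sum.inl ((i : ℕ) : Fin (l + 1))))
            (fun i : ℕ => w (Sum.inl ((i : ℕ) : Fin (l + 1))))
            (by simp) (fun i hi => by simp [hi]) (fun i j => rfl)
          simpa only [Nat.cast_zero] using this
  -- mixed blocks, right side
  have hRLK : (∑ i : Fin (l + 1), ∑ k : K,
        v (Sum.inl i) * (d (Sum.inl i) : ℚ)
          * ((if (Sum.inl i : Fin (l + 1) ⊕ K) = Sum.inr k then 2 else 0)
            - (a (Sum.inl i) (Sum.inr k) : ℚ)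
              / (Nat.gcd (d (Sum.inl i)) (d (Sum.inr k)) : ℚ) * (d (Sum.inr k) : ℚ))
          * w (Sum.inr k))
      = -(v (Sum.inl 0) * ∑ k : K,
          (a (Sum.inl 0) (Sum.inr k) : ℚ) * (d (Sum.inr k) : ℚ) * w (Sum.inr k)) := by
    have hz : ∀ i : Fin (l + 1), i ≠ 0 →
        (∑ k : K, v (Sum.inl i) * (d (Sum.inl i) : ℚ)
          * ((if (Sum.inl i : Fin (l + 1) ⊕ K) = Sum.inr k then 2 else 0)
            - (a (Sum.inl i) (Sum.inr k) : ℚ)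
              / (Nat.gcd (d (Sum.inl i)) (d (Sum.inr k)) : ℚ) * (d (Sum.inr k) : ℚ))
          * w (Sum.inr k)) = 0 := by
      intro i hi
      refine Finset.sum_eq_zero fun k _ => ?_
      rw [ha_K i k hi, if_neg (Sum.inl_ne_inr)]
      simp
    rw [Fintype.sum_eq_single (0 : Fin (l + 1)) hz, Finset.mul_sum, ← Finset.sum_neg_distrib]
    refine Finset.sum_congr rfl fun k _ => ?_
    rw [hd0, Nat.gcd_one_left, if_neg (Sum.inl_ne_inr)]
    push_cast
    ring
  have hRKL : (∑ k : K, ∑ j : Fin (l + 1),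
        v (Sum.inr k) * (d (Sum.inr k) : ℚ)
          * ((if (Sum.inr k : Fin (l + 1) ⊕ K) = Sum.inl j then 2 else 0)
            - (a (Sum.inr k) (Sum.inl j) : ℚ)
              / (Nat.gcd (d (Sum.inr k)) (d (Sum.inl j)) : ℚ) * (d (Sum.inl j) : ℚ))
          * w (Sum.inl j))
      = -((∑ k : K,
          (a (Sum.inl 0) (Sum.inr k) : ℚ) * (d (Sum.inr k) : ℚ) * v (Sum.inr k))
          * w (Sum.inl 0)) := by
    have inner : ∀ k : K, (∑ j : Fin (l + 1),
        v (Sum.inr k) * (d (Sum.inr k) : ℚ)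
          * ((if (Sum.inr k : Fin (l + 1) ⊕ K) = Sum.inl j then 2 else 0)
            - (a (Sum.inr k) (Sum.inl j) : ℚ)
              / (Nat.gcd (d (Sum.inr k)) (d (Sum.inl j)) : ℚ) * (d (Sum.inl j) : ℚ))
          * w (Sum.inl j))
        = -((a (Sum.inl 0) (Sum.inr k) : ℚ) * (d (Sum.inr k) : ℚ) * v (Sum.inr k)
            * w (Sum.inl 0)) := by
      intro k
      have hz : ∀ j : Fin (l + 1), j ≠ 0 →
          v (Sum.inr k) * (d (Sum.inr k) : ℚ)
            * ((if (Sum.inr k : Fin (l + 1) ⊕ K) = Sum.inl j then 2 else 0)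
              - (a (Sum.inr k) (Sum.inl j) : ℚ)
                / (Nat.gcd (d (Sum.inr k)) (d (Sum.inl j)) : ℚ) * (d (Sum.inl j) : ℚ))
            * w (Sum.inl j) = 0 := by
        intro j hj
        rw [ha_symm, ha_K j k hj, if_neg (Sum.inr_ne_inl)]
        simp
      rw [Fintype.sum_eq_single (0 : Fin (l + 1)) hz, hd0, Nat.gcd_one_right,
        ha_symm, if_neg (Sum.inr_ne_inl)]
      push_cast
      ring
    rw [Finset.sum_congr rfl (fun k _ => inner k), Finset.sum_mul, ← Finset.sum_neg_distrib]
  -- mixed blocks, left side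
  have hLLK : (∑ i : Fin (l + 1), ∑ k : K,
        φ v (Sum.inl i) * (dc (Sum.inl i) : ℚ)
          * ((if (Sum.inl i : Fin (l + 1) ⊕ K) = Sum.inr k then 2 else 0)
            - (ac (Sum.inl i) (Sum.inr k) : ℚ)
              / (Nat.gcd (dc (Sum.inl i)) (dc (Sum.inr k)) : ℚ) * (dc (Sum.inr k) : ℚ))
          * φ w (Sum.inr k))
      = -(v (Sum.inl 0) * ∑ k : K,
          (a (Sum.inl 0) (Sum.inr k) : ℚ) * (d (Sum.inr k) : ℚ) * w (Sum.inr k)) := by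
    calc (∑ i : Fin (l + 1), ∑ k : K,
        φ v (Sum.inl i) * (dc (Sum.inl i) : ℚ)
          * ((if (Sum.inl i : Fin (l + 1) ⊕ K) = Sum.inr k then 2 else 0)
            - (ac (Sum.inl i) (Sum.inr k) : ℚ)
              / (Nat.gcd (dc (Sum.inl i)) (dc (Sum.inr k)) : ℚ) * (dc (Sum.inr k) : ℚ))
          * φ w (Sum.inr k))
        = (∑ i : Fin (l + 1), φ v (Sum.inl i))
            * (∑ k : K, -((a (Sum.inl 0) (Sum.inr k) : ℚ) * (d (Sum.inr k) : ℚ)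
                * w (Sum.inr k))) := by
          rw [Finset.sum_mul_sum]
          refine Finset.sum_congr rfl fun i _ => Finset.sum_congr rfl fun k _ => ?_
          rw [hφ_K, hdc_leg, hdc_K, hac_K, Nat.gcd_one_left, if_neg (Sum.inl_ne_inr)]
          push_cast
          ring
      _ = _ := by
          rw [htvFin, Finset.sum_neg_distrib]
          ring
  have hLKL : (∑ k : K, ∑ j : Fin (l + 1),
        φ v (Sum.inr k) * (dc (Sum.inr k) : ℚ)
          * ((if (Sum.inr k : Fin (l + 1) ⊕ K) = Sum.inl j then 2 else 0)
            - (ac (Sum.inr k) (Sum.inl j) : ℚ)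
              / (Nat.gcd (dc (Sum.inr k)) (dc (Sum.inl j)) : ℚ) * (dc (Sum.inl j) : ℚ))
          * φ w (Sum.inl j))
      = -((∑ k : K,
          (a (Sum.inl 0) (Sum.inr k) : ℚ) * (d (Sum.inr k) : ℚ) * v (Sum.inr k))
          * w (Sum.inl 0)) := by
    calc (∑ k : K, ∑ j : Fin (l + 1),
        φ v (Sum.inr k) * (dc (Sum.inr k) : ℚ)
          * ((if (Sum.inr k : Fin (l + 1) ⊕ K) = Sum.inl j then 2 else 0)
            - (ac (Sum.inr k) (Sum.inl j) : ℚ)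
              / (Nat.gcd (dc (Sum.inr k)) (dc (Sum.inl j)) : ℚ) * (dc (Sum.inl j) : ℚ))
          * φ w (Sum.inl j))
        = (∑ k : K, -((a (Sum.inl 0) (Sum.inr k) : ℚ) * (d (Sum.inr k) : ℚ)
            * v (Sum.inr k)))
            * (∑ j : Fin (l + 1), φ w (Sum.inl j)) := by
          rw [Finset.sum_mul_sum]
          refine Finset.sum_congr rfl fun k _ => Finset.sum_congr rfl fun j _ => ?_
          rw [hφ_K, hdc_K, hdc_leg, hac_symm, hac_K, Nat.gcd_one_right,
            if_neg (Sum.inr_ne_inl)]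
          push_cast
          ring
      _ = _ := by
          rw [htwFin, Finset.sum_neg_distrib]
          ring
  have hLKK : (∑ k : K, ∑ k' : K,
        φ v (Sum.inr k) * (dc (Sum.inr k) : ℚ)
          * ((if (Sum.inr k : Fin (l + 1) ⊕ K) = Sum.inr k' then 2 else 0)
            - (ac (Sum.inr k) (Sum.inr k') : ℚ)
              / (Nat.gcd (dc (Sum.inr k)) (dc (Sum.inr k')) : ℚ) * (dc (Sum.inr k') : ℚ))
          * φ w (Sum.inr k'))
      = ∑ k : K, ∑ k' : K,
        v (Sum.inr k) * (d (Sum.inr k) : ℚ)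
          * ((if (Sum.inr k : Fin (l + 1) ⊕ K) = Sum.inr k' then 2 else 0)
            - (a (Sum.inr k) (Sum.inr k') : ℚ)
              / (Nat.gcd (d (Sum.inr k)) (d (Sum.inr k')) : ℚ) * (d (Sum.inr k') : ℚ))
          * w (Sum.inr k') := by
    refine Finset.sum_congr rfl fun k _ => Finset.sum_congr rfl fun k' _ => ?_
    rw [hφ_K, hφ_K, hdc_K, hdc_K, hac_KK]
  -- assemble
  simp only [Fintype.sum_sum_type, Finset.sum_add_distrib]
  rw [hLLL, hLLK, hLKL, hLKK, hRLL, hRLK, hRKL]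
end
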